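/- arXiv:2209.02621 — 4 statements merged into one kernel-verified Lean document; each statement's English description precedes it below -/
import Mathlib

section
/- The generalized incompatibility robustness of any pair of instruments is lower bounded by the generalized incompatibility robustness of their induced POVMs: R_I(I₁,I₂) ≥ R_M(A₁,A₂), where A_i is the POVM induced by I_i. -/
open Matrix
open scoped Kronecker BigOperators ComplexOrder

noncomputable section

namespace QI

/-- Linear maps between matrix algebras (superoperators). -/
abbrev MatMap (n m : Type*) [Fintype n] [Fintype m] :=
  Matrix n n ℂ →ₗ[ℂ] Matrix m m ℂ

variable {n m m₁ m₂ ι ι₁ ι₂ : Type*}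

/-- The Choi matrix of a superoperator. -/
def choi [Fintype n] [DecidableEq n] [Fintype m] (Φ : MatMap n m) :
    Matrix (n × m) (n × m) ℂ :=
  Matrix.of fun p q => Φ (Matrix.single p.1 q.1 1) p.2 q.2

/-- Complete positivity, via positive semidefiniteness of the Choi matrix. -/
def IsCP [Fintype n] [DecidableEq n] [Fintype m] (Φ : MatMap n m) : Prop :=
  (choi Φ).PosSemidef

/-- Trace preserving map. -/
def IsTP [Fintype n] [Fintype m] (Φ : MatMap n m) : Prop :=
  ∀ ρ, (Φ ρ).trace = ρ.trace

/-- Trace non-increasing map (on positive semidefinite inputs). -/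
def IsTNI [Fintype n] [Fintype m] (Φ : MatMap n m) : Prop :=
  ∀ ρ : Matrix n n ℂ, ρ.PosSemidef → (Φ ρ).trace.re ≤ ρ.trace.re

/-- A quantum channel: CP and trace preserving. -/
def IsChannel [Fintype n] [DecidableEq n] [Fintype m] (Φ : MatMap n m) : Prop :=
  IsCP Φ ∧ IsTP Φ

/-- A quantum instrument: a finite family of CP maps summing to a TP map. -/
structure Instrument (ι n m : Type*) [Fintype ι] [Fintype n] [DecidableEq n] [Fintype m] where
  op : ι → MatMap n m
  cp : ∀ x, IsCP (op x)
  tp : IsTP (∑ x, op x)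

/-- Partial trace over the second tensor factor, as a linear map. -/
def ptrace₂ [Fintype m₁] [Fintype m₂] :
    Matrix (m₁ × m₂) (m₁ × m₂) ℂ →ₗ[ℂ] Matrix m₁ m₁ ℂ where
  toFun M := Matrix.of fun i j => ∑ k, M (i, k) (j, k)
  map_add' M N := by ext i j; simp [Finset.sum_add_distrib]
  map_smul' c M := by ext i j; simp [Finset.mul_sum]

/-- Partial trace over the first tensor factor, as a linear map. -/
def ptrace₁ [Fintype m₁] [Fintype m₂] :
    Matrix (m₁ × m₂) (m₁ × m₂) ℂ →ₗ[ℂ] Matrix m₂ m₂ ℂ where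
  toFun M := Matrix.of fun i j => ∑ k, M (k, i) (k, j)
  map_add' M N := by ext i j; simp [Finset.sum_add_distrib]
  map_smul' c M := by ext i j; simp [Finset.mul_sum]

/-- Parallel compatibility of two instruments. -/
def ParallelCompatible [Fintype ι₁] [Fintype ι₂] [Fintype n] [DecidableEq n]
    [Fintype m₁] [Fintype m₂]
    (I₁ : Instrument ι₁ n m₁) (I₂ : Instrument ι₂ n m₂) : Prop :=
  ∃ J : Instrument (ι₁ × ι₂) n (m₁ × m₂),
    (∀ x, ∑ y, ptrace₂ ∘ₗ J.op (x, y) = I₁.op x) ∧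
    (∀ y, ∑ x, ptrace₁ ∘ₗ J.op (x, y) = I₂.op y)

/-- The dual (Heisenberg picture) of a superoperator, characterized by
`tr[Φ(ρ) M] = tr[ρ Φ*(M)]`. -/
def dualMap [Fintype n] [DecidableEq n] [Fintype m] (Φ : MatMap n m) (M : Matrix m m ℂ) :
    Matrix n n ℂ :=
  Matrix.of fun i j => (Φ (Matrix.single j i 1) * M).trace

/-- A POVM: positive semidefinite effects summing to the identity. -/
def IsPOVM [Fintype n] [DecidableEq n] (A : ι → Matrix n n ℂ) [Fintype ι] : Prop :=
  (∀ x, (A x).PosSemidef) ∧ ∑ x, A x = 1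

/-- The POVM induced by an instrument: `A(x) = Φ_x*(𝟙)`. -/
def inducedPOVM [Fintype ι] [Fintype n] [DecidableEq n] [Fintype m] [DecidableEq m]
    (I : Instrument ι n m) (x : ι) : Matrix n n ℂ :=
  dualMap (I.op x) 1

/-- Compatibility of two POVMs via a joint POVM. -/
def POVMsCompatible [Fintype ι₁] [Fintype ι₂] [Fintype n] [DecidableEq n]
    (A₁ : ι₁ → Matrix n n ℂ) (A₂ : ι₂ → Matrix n n ℂ) : Prop :=
  ∃ G : ι₁ × ι₂ → Matrix n n ℂ, IsPOVM G ∧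
    (∀ x, ∑ y, G (x, y) = A₁ x) ∧ (∀ y, ∑ x, G (x, y) = A₂ y)

/-- Compatibility of two channels via a joint channel. -/
def ChannelsCompatible [Fintype n] [DecidableEq n] [Fintype m₁] [Fintype m₂]
    (Φ₁ : MatMap n m₁) (Φ₂ : MatMap n m₂) : Prop :=
  ∃ Λ : MatMap n (m₁ × m₂), IsChannel Λ ∧
    ptrace₂ ∘ₗ Λ = Φ₁ ∧ ptrace₁ ∘ₗ Λ = Φ₂

/-- Generalized incompatibility robustness of a pair of instruments. -/
def RI [Fintype ι₁] [Fintype ι₂] [Fintype n] [DecidableEq n]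
    [Fintype m₁] [Fintype m₂]
    (I₁ : Instrument ι₁ n m₁) (I₂ : Instrument ι₂ n m₂) : ℝ :=
  sInf {r : ℝ | 0 ≤ r ∧
    ∃ (N₁ : Instrument ι₁ n m₁) (N₂ : Instrument ι₂ n m₂)
      (J : Instrument (ι₁ × ι₂) n (m₁ × m₂)),
      (∀ x, ((1 + r : ℝ) : ℂ)⁻¹ • (I₁.op x + (r : ℂ) • N₁.op x)
          = ∑ y, ptrace₂ ∘ₗ J.op (x, y)) ∧
      (∀ y, ((1 + r : ℝ) : ℂ)⁻¹ • (I₂.op y + (r : ℂ) • N₂.op y)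
          = ∑ x, ptrace₁ ∘ₗ J.op (x, y))}

/-- Generalized incompatibility robustness of a pair of POVMs. -/
def RM [Fintype ι₁] [Fintype ι₂] [Fintype n] [DecidableEq n]
    (A₁ : ι₁ → Matrix n n ℂ) (A₂ : ι₂ → Matrix n n ℂ) : ℝ :=
  sInf {r : ℝ | 0 ≤ r ∧
    ∃ (B₁ : ι₁ → Matrix n n ℂ) (B₂ : ι₂ → Matrix n n ℂ) (G : ι₁ × ι₂ → Matrix n n ℂ),
      IsPOVM B₁ ∧ IsPOVM B₂ ∧ (∀ p, (G p).PosSemidef) ∧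
      (∀ x, ((1 + r : ℝ) : ℂ)⁻¹ • (A₁ x + (r : ℂ) • B₁ x) = ∑ y, G (x, y)) ∧
      (∀ y, ((1 + r : ℝ) : ℂ)⁻¹ • (A₂ y + (r : ℂ) • B₂ y) = ∑ x, G (x, y))}

/-- Generalized incompatibility robustness of a pair of channels. -/
def RC [Fintype n] [DecidableEq n] [Fintype m₁] [Fintype m₂]
    (Φ₁ : MatMap n m₁) (Φ₂ : MatMap n m₂) : ℝ :=
  sInf {r : ℝ | 0 ≤ r ∧
    ∃ (N₁ : MatMap n m₁) (N₂ : MatMap n m₂) (Λ : MatMap n (m₁ × m₂)),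
      IsChannel N₁ ∧ IsChannel N₂ ∧ IsChannel Λ ∧
      ((1 + r : ℝ) : ℂ)⁻¹ • (Φ₁ + (r : ℂ) • N₁) = ptrace₂ ∘ₗ Λ ∧
      ((1 + r : ℝ) : ℂ)⁻¹ • (Φ₂ + (r : ℂ) • N₂) = ptrace₁ ∘ₗ Λ}

/-- Post-processing relation on instruments: `I₂ ≲ I₁`. -/
def PostProcessingOf [Fintype ι₁] [Fintype ι₂] [Fintype n] [DecidableEq n]
    [Fintype m₁] [DecidableEq m₁] [Fintype m₂]
    (I₂ : Instrument ι₂ n m₂) (I₁ : Instrument ι₁ n m₁) : Prop :=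
  ∃ R : ι₁ → Instrument ι₂ m₁ m₂,
    ∀ y, I₂.op y = ∑ x, (R x).op y ∘ₗ I₁.op x

/-- A density matrix (quantum state). -/
def IsState [Fintype m] (η : Matrix m m ℂ) : Prop :=
  η.PosSemidef ∧ η.trace = 1

/-- A pure state. -/
def IsPureState [Fintype m] (η : Matrix m m ℂ) : Prop :=
  ∃ v : m → ℂ, (∑ i, star (v i) * v i) = 1 ∧ η = Matrix.vecMulVec v (star v)

/-- The trash-and-prepare map `ρ ↦ tr(ρ) • η`. -/
def trashPrep [Fintype n] [Fintype m] (η : Matrix m m ℂ) : MatMap n m :=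
  (Matrix.traceLinearMap n ℂ ℂ).smulRight η

/-- Tensoring with a fixed matrix on the right, as a linear map. -/
def kronRight [Fintype m₁] [Fintype m₂] (B : Matrix m₂ m₂ ℂ) :
    Matrix m₁ m₁ ℂ →ₗ[ℂ] Matrix (m₁ × m₂) (m₁ × m₂) ℂ where
  toFun A := A ⊗ₖ B
  map_add' A A' := by ext ⟨i, k⟩ ⟨j, l⟩; simp [Matrix.kroneckerMap_apply, add_mul]
  map_smul' c A := by ext ⟨i, k⟩ ⟨j, l⟩; simp [Matrix.kroneckerMap_apply, mul_assoc]

/-- Tensoring with a fixed matrix on the left, as a linear map. -/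
def kronLeft [Fintype m₁] [Fintype m₂] (A : Matrix m₁ m₁ ℂ) :
    Matrix m₂ m₂ ℂ →ₗ[ℂ] Matrix (m₁ × m₂) (m₁ × m₂) ℂ where
  toFun B := A ⊗ₖ B
  map_add' B B' := by ext ⟨i, k⟩ ⟨j, l⟩; simp [Matrix.kroneckerMap_apply, mul_add]
  map_smul' c B := by
    ext ⟨i, k⟩ ⟨j, l⟩
    simp only [Matrix.kroneckerMap_apply, Matrix.smul_apply, smul_eq_mul, RingHom.id_apply]
    ring

/-- Measure-and-prepare operation: `ρ ↦ tr(ρ A) • σ`. -/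
def mpOp [Fintype n] [Fintype m] (A : Matrix n n ℂ) (σ : Matrix m m ℂ) : MatMap n m where
  toFun ρ := (ρ * A).trace • σ
  map_add' ρ ρ' := by simp [Matrix.add_mul, Matrix.trace_add, add_smul]
  map_smul' c ρ := by simp [Matrix.smul_mul, Matrix.trace_smul, smul_smul]

/-- Conjugation by a Kraus operator: `ρ ↦ K ρ K†`. -/
def krausOp [Fintype n] [Fintype m] (K : Matrix m n ℂ) : MatMap n m where
  toFun ρ := K * ρ * Kᴴ
  map_add' ρ ρ' := by simp [Matrix.mul_add, Matrix.add_mul]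
  map_smul' c ρ := by simp [Matrix.mul_smul, Matrix.smul_mul]

end QI

end
noncomputable section
namespace QIAux
open QI Matrix
open scoped Kronecker ComplexOrder

variable {n m m₁ m₂ ι ι₁ ι₂ : Type*}

lemma psd_zero [Fintype n] : (0 : Matrix n n ℂ).PosSemidef := by
  constructor
  · ext i j; simp [Matrix.IsHermitian]
  · intro x; simp

lemma psd_smul [Fintype n] {c : ℂ} (hc : 0 ≤ c) {M : Matrix n n ℂ}
    (h : M.PosSemidef) : (c • M).PosSemidef := by
  have him : c.im = 0 := by
    have := (Complex.le_def.mp hc).2; simpa using this.symm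
  have hs : star c = c := by
    rw [Complex.star_def, Complex.conj_eq_iff_im]; exact him
  rw [Matrix.posSemidef_iff_dotProduct_mulVec]
  constructor
  · rw [Matrix.IsHermitian, Matrix.conjTranspose_smul, hs, h.1]
  · intro x
    rw [Matrix.smul_mulVec, dotProduct_smul]
    exact mul_nonneg hc (h.dotProduct_mulVec_nonneg x)

end QIAux
end
noncomputable section
namespace QIAux
open QI Matrix
open scoped Kronecker ComplexOrder

variable {n m m' m₁ m₂ ι ι₁ ι₂ : Type*}

lemma choi_add [Fintype n] [DecidableEq n] [Fintype m] (Φ Ψ : MatMap n m) :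
    choi (Φ + Ψ) = choi Φ + choi Ψ := by
  ext p q; simp [choi]

lemma choi_smul [Fintype n] [DecidableEq n] [Fintype m] (c : ℂ) (Φ : MatMap n m) :
    choi (c • Φ) = c • choi Φ := by
  ext p q; simp [choi]

lemma dualMap_add [Fintype n] [DecidableEq n] [Fintype m] (Φ Ψ : MatMap n m)
    (M : Matrix m m ℂ) : dualMap (Φ + Ψ) M = dualMap Φ M + dualMap Ψ M := by
  ext i j; simp [dualMap, Matrix.add_mul]

lemma dualMap_smul [Fintype n] [DecidableEq n] [Fintype m] (c : ℂ) (Φ : MatMap n m)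
    (M : Matrix m m ℂ) : dualMap (c • Φ) M = c • dualMap Φ M := by
  ext i j; simp [dualMap, Matrix.smul_mul]

lemma dualMap_sum [Fintype n] [DecidableEq n] [Fintype m] {α : Type*} (s : Finset α)
    (Φ : α → MatMap n m) (M : Matrix m m ℂ) :
    dualMap (∑ a ∈ s, Φ a) M = ∑ a ∈ s, dualMap (Φ a) M := by
  ext i j
  simp [dualMap, Matrix.sum_apply, Finset.sum_mul, Matrix.trace_sum]

lemma isCP_comp_kraus [Fintype n] [DecidableEq n] [Fintype m] [Fintype m']
    (K : Matrix m' m ℂ) {Φ : MatMap n m} (h : IsCP Φ) : IsCP (krausOp K ∘ₗ Φ) := by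
  classical
  set B : Matrix (n × m') (n × m) ℂ :=
    Matrix.of (fun p q => if p.1 = q.1 then K p.2 q.2 else 0) with hB
  have key : choi (krausOp K ∘ₗ Φ) = B * choi Φ * Bᴴ := by
    ext ⟨i, a⟩ ⟨j, a'⟩
    simp only [choi, Matrix.of_apply, LinearMap.comp_apply, krausOp, LinearMap.coe_mk,
      AddHom.coe_mk, Matrix.mul_apply, Matrix.conjTranspose_apply, hB,
      Fintype.sum_prod_type]
    simp [apply_ite (starRingEnd ℂ), mul_ite, mul_zero, ite_mul, zero_mul,
      Finset.sum_ite_eq, Finset.sum_ite_eq', Finset.mul_sum, Finset.sum_mul, mul_assoc]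
  rw [IsCP, key]
  exact h.mul_mul_conjTranspose_same B
lemma psd_sum [Fintype n] {α : Type*} (s : Finset α) (f : α → Matrix n n ℂ)
    (h : ∀ a ∈ s, (f a).PosSemidef) : (∑ a ∈ s, f a).PosSemidef := by
  classical
  induction s using Finset.induction_on with
  | empty => simpa using psd_zero
  | insert _ _ hx ih =>
    rw [Finset.sum_insert hx]
    exact ((h _ (Finset.mem_insert_self _ _)).add
      (ih fun a ha => h a (Finset.mem_insert_of_mem ha)))

lemma dualMap_one_posSemidef [Fintype n] [DecidableEq n] [Fintype m] [DecidableEq m]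
    {Φ : MatMap n m} (h : IsCP Φ) : (dualMap Φ 1).PosSemidef := by
  classical
  have key : dualMap Φ 1
      = ∑ k : m, ((choi Φ)ᵀ.submatrix (fun i : n => (i, k)) (fun j : n => (j, k))) := by
    ext i j
    simp [dualMap, choi, Matrix.trace, Matrix.diag, Matrix.sum_apply]
  rw [key]
  exact psd_sum _ _ fun k _ => (h.transpose).submatrix _

lemma dualMap_one_of_TP [Fintype n] [DecidableEq n] [Fintype m] [DecidableEq m]
    {Φ : MatMap n m} (h : IsTP Φ) : dualMap Φ 1 = 1 := by
  ext i j
  have := h (Matrix.single j i 1)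
  simp only [dualMap, Matrix.of_apply, Matrix.mul_one, this]
  by_cases hij : i = j
  · subst hij; rw [Matrix.trace_single_eq_same, Matrix.one_apply_eq]
  · rw [Matrix.one_apply_ne hij, Matrix.trace]
    refine Finset.sum_eq_zero fun k _ => ?_
    simp only [Matrix.diag_apply, Matrix.single, Matrix.of_apply]
    rw [if_neg]
    rintro ⟨rfl, rfl⟩
    exact hij rfl

lemma isPOVM_inducedPOVM [Fintype ι] [Fintype n] [DecidableEq n] [Fintype m] [DecidableEq m]
    (I : Instrument ι n m) : IsPOVM (inducedPOVM I) := by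
  constructor
  · intro x; exact dualMap_one_posSemidef (I.cp x)
  · rw [show ∑ x, inducedPOVM I x = dualMap (∑ x, I.op x) 1 from (dualMap_sum _ _ _).symm]
    exact dualMap_one_of_TP I.tp

lemma trace_ptrace₂ [Fintype m₁] [Fintype m₂] (M : Matrix (m₁ × m₂) (m₁ × m₂) ℂ) :
    (ptrace₂ M).trace = M.trace := by
  simp [ptrace₂, Matrix.trace, Matrix.diag, Fintype.sum_prod_type]

lemma trace_ptrace₁ [Fintype m₁] [Fintype m₂] (M : Matrix (m₁ × m₂) (m₁ × m₂) ℂ) :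
    (ptrace₁ M).trace = M.trace := by
  rw [Matrix.trace, Matrix.trace, Fintype.sum_prod_type]
  rw [Finset.sum_comm]
  simp [ptrace₁, Matrix.diag]

lemma dualMap_ptrace₂ [Fintype n] [DecidableEq n] [Fintype m₁] [DecidableEq m₁] [Fintype m₂] [DecidableEq m₂]
    (Λ : MatMap n (m₁ × m₂)) : dualMap (ptrace₂ ∘ₗ Λ) 1 = dualMap Λ 1 := by
  ext i j
  simp only [dualMap, Matrix.of_apply, Matrix.mul_one, LinearMap.comp_apply]
  exact trace_ptrace₂ _

lemma dualMap_ptrace₁ [Fintype n] [DecidableEq n] [Fintype m₁] [DecidableEq m₁] [Fintype m₂] [DecidableEq m₂]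
    (Λ : MatMap n (m₁ × m₂)) : dualMap (ptrace₁ ∘ₗ Λ) 1 = dualMap Λ 1 := by
  ext i j
  simp only [dualMap, Matrix.of_apply, Matrix.mul_one, LinearMap.comp_apply]
  exact trace_ptrace₁ _
end QIAux
end
noncomputable section
namespace QIAux
open QI Matrix
open scoped Kronecker ComplexOrder

variable {n m m' m₁ m₂ ι ι₁ ι₂ : Type*}

lemma choi_sum [Fintype n] [DecidableEq n] [Fintype m] {α : Type*} (s : Finset α)
    (Φ : α → MatMap n m) : choi (∑ a ∈ s, Φ a) = ∑ a ∈ s, choi (Φ a) := by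
  ext p q; simp [choi, Matrix.sum_apply]

lemma isCP_zero [Fintype n] [DecidableEq n] [Fintype m] : IsCP (0 : MatMap n m) := by
  have : choi (0 : MatMap n m) = 0 := by ext p q; simp [choi]
  rw [IsCP, this]; exact psd_zero

lemma isCP_add [Fintype n] [DecidableEq n] [Fintype m] {Φ Ψ : MatMap n m}
    (hΦ : IsCP Φ) (hΨ : IsCP Ψ) : IsCP (Φ + Ψ) := by
  rw [IsCP, choi_add]; exact hΦ.add hΨ

lemma isCP_smul [Fintype n] [DecidableEq n] [Fintype m] {c : ℂ} (hc : 0 ≤ c)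
    {Φ : MatMap n m} (hΦ : IsCP Φ) : IsCP (c • Φ) := by
  rw [IsCP, choi_smul]; exact psd_smul hc hΦ

lemma isCP_sum [Fintype n] [DecidableEq n] [Fintype m] {α : Type*} (s : Finset α)
    {Φ : α → MatMap n m} (h : ∀ a ∈ s, IsCP (Φ a)) : IsCP (∑ a ∈ s, Φ a) := by
  rw [IsCP, choi_sum]; exact psd_sum _ _ h

lemma psd_rank1 [Fintype n] (w : n → ℂ) : (Matrix.vecMulVec w (star w)).PosSemidef := by
  rw [Matrix.posSemidef_iff_dotProduct_mulVec]
  constructor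
  · ext i j
    simp only [Matrix.conjTranspose_apply, Matrix.vecMulVec_apply, Pi.star_apply,
      star_mul', star_star]
    ring
  · intro x
    have key : dotProduct (star x) (Matrix.vecMulVec w (star w) *ᵥ x)
        = star (∑ i, star (w i) * x i) * (∑ i, star (w i) * x i) := by
      simp only [dotProduct, Matrix.mulVec, Matrix.vecMulVec_apply, Pi.star_apply,
        star_sum, star_mul', star_star, Finset.mul_sum, Finset.sum_mul]
      rw [Finset.sum_comm]
      refine Finset.sum_congr rfl fun i _ => Finset.sum_congr rfl fun j _ => ?_
      ring
    rw [key]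
    exact star_mul_self_nonneg _

lemma isCP_krausOp [Fintype n] [DecidableEq n] [Fintype m] (K : Matrix m n ℂ) :
    IsCP (krausOp K) := by
  have key : choi (krausOp K) = Matrix.vecMulVec (fun p : n × m => K p.2 p.1)
      (star fun p : n × m => K p.2 p.1) := by
    ext ⟨i, a⟩ ⟨j, b⟩
    simp only [choi, Matrix.of_apply, krausOp, LinearMap.coe_mk, AddHom.coe_mk,
      Matrix.mul_apply, Matrix.conjTranspose_apply, Matrix.single, Matrix.of_apply,
      Matrix.vecMulVec_apply, Pi.star_apply]
    simp [ite_and, ite_mul, mul_ite, mul_zero, zero_mul, Finset.sum_ite_eq, Finset.sum_ite_eq']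
  rw [IsCP, key]
  exact psd_rank1 _

lemma trashPrep_std_eq [Fintype n] [DecidableEq n] [Fintype m] [DecidableEq m] (k₀ : m) :
    (trashPrep (Matrix.single k₀ k₀ 1) : MatMap n m)
      = ∑ a : n, krausOp (Matrix.single k₀ a 1) := by
  apply LinearMap.ext; intro ρ
  simp only [trashPrep, LinearMap.smulRight_apply, Matrix.traceLinearMap_apply,
    LinearMap.sum_apply, krausOp, LinearMap.coe_mk, AddHom.coe_mk]
  ext i j
  simp only [Matrix.sum_apply, Matrix.smul_apply, Matrix.mul_apply, Matrix.conjTranspose_apply,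
    Matrix.single, Matrix.of_apply, smul_eq_mul, apply_ite (starRingEnd ℂ),
    _root_.map_one, _root_.map_zero, ite_and, mul_ite, ite_mul, mul_zero, zero_mul, mul_one,
    one_mul, Finset.sum_ite_eq, Finset.sum_ite_eq', Finset.mem_univ, if_true,
    Finset.sum_const_zero]
  by_cases hi : k₀ = i
  · subst hi
    by_cases hj : k₀ = j
    · subst hj
      simp [Matrix.trace, Matrix.diag, apply_ite (star : ℂ → ℂ), mul_comm]
    · simp [hj]
  · simp [hi]

lemma isCP_trashPrep_std [Fintype n] [DecidableEq n] [Fintype m] [DecidableEq m] (k₀ : m) :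
    IsCP (trashPrep (Matrix.single k₀ k₀ 1) : MatMap n m) := by
  rw [trashPrep_std_eq]
  exact isCP_sum _ fun a _ => isCP_krausOp _

lemma kronRight_std_eq [Fintype m₁] [DecidableEq m₁] [Fintype m₂] [DecidableEq m₂] (l₀ : m₂) :
    (kronRight (Matrix.single l₀ l₀ 1) : Matrix m₁ m₁ ℂ →ₗ[ℂ] _)
      = krausOp (Matrix.of fun (p : m₁ × m₂) (k : m₁) => if p.1 = k ∧ p.2 = l₀ then (1:ℂ) else 0) := by
  apply LinearMap.ext; intro A
  simp only [kronRight, krausOp, LinearMap.coe_mk, AddHom.coe_mk]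
  ext ⟨k, l⟩ ⟨k', l'⟩
  simp only [Matrix.kroneckerMap_apply, Matrix.mul_apply, Matrix.conjTranspose_apply,
    Matrix.of_apply, Matrix.single, ite_and, apply_ite (star : ℂ → ℂ), star_one,
    star_zero, mul_ite, ite_mul, mul_zero, zero_mul, mul_one, one_mul,
    Finset.sum_ite_eq, Finset.sum_ite_eq', Finset.mem_univ, if_true, Finset.sum_const_zero]
  split_ifs <;> first | rfl | (subst_vars; simp_all)

lemma kronLeft_std_eq [Fintype m₁] [DecidableEq m₁] [Fintype m₂] [DecidableEq m₂] (k₀ : m₁) :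
    (kronLeft (Matrix.single k₀ k₀ 1) : Matrix m₂ m₂ ℂ →ₗ[ℂ] _)
      = krausOp (Matrix.of fun (p : m₁ × m₂) (l : m₂) => if p.2 = l ∧ p.1 = k₀ then (1:ℂ) else 0) := by
  apply LinearMap.ext; intro B
  simp only [kronLeft, krausOp, LinearMap.coe_mk, AddHom.coe_mk]
  ext ⟨k, l⟩ ⟨k', l'⟩
  simp only [Matrix.kroneckerMap_apply, Matrix.mul_apply, Matrix.conjTranspose_apply,
    Matrix.of_apply, Matrix.single, ite_and, apply_ite (star : ℂ → ℂ), star_one,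
    star_zero, mul_ite, ite_mul, mul_zero, zero_mul, mul_one, one_mul,
    Finset.sum_ite_eq, Finset.sum_ite_eq', Finset.mem_univ, if_true, Finset.sum_const_zero]
  split_ifs <;> first | rfl | (subst_vars; simp_all)

lemma isCP_comp' [Fintype n] [DecidableEq n] [Fintype m] [Fintype m']
    {Φ : MatMap n m} (h : IsCP Φ) (K : Matrix m' m ℂ) : IsCP (krausOp K ∘ₗ Φ) :=
  isCP_comp_kraus K h

lemma ptrace₂_kron [Fintype m₁] [Fintype m₂] (A : Matrix m₁ m₁ ℂ) (B : Matrix m₂ m₂ ℂ) :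
    ptrace₂ (A ⊗ₖ B) = B.trace • A := by
  ext i j
  simp [ptrace₂, Matrix.trace, Matrix.diag, Finset.mul_sum, mul_comm]

lemma ptrace₁_kron [Fintype m₁] [Fintype m₂] (A : Matrix m₁ m₁ ℂ) (B : Matrix m₂ m₂ ℂ) :
    ptrace₁ (A ⊗ₖ B) = A.trace • B := by
  ext i j
  simp [ptrace₁, Matrix.trace, Matrix.diag, Finset.sum_mul]

end QIAux
end
noncomputable section
namespace QIAux
open QI Matrix
open scoped Kronecker ComplexOrder

variable {n m m' m₁ m₂ ι ι₁ ι₂ : Type*}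

lemma isCP_kronRight_comp [Fintype n] [DecidableEq n] [Fintype m₁] [DecidableEq m₁]
    [Fintype m₂] [DecidableEq m₂] (l₀ : m₂) {Φ : MatMap n m₁} (h : IsCP Φ) :
    IsCP ((kronRight (Matrix.single l₀ l₀ 1) : Matrix m₁ m₁ ℂ →ₗ[ℂ] _) ∘ₗ Φ) := by
  rw [kronRight_std_eq]; exact isCP_comp_kraus _ h

lemma isCP_kronLeft_comp [Fintype n] [DecidableEq n] [Fintype m₁] [DecidableEq m₁]
    [Fintype m₂] [DecidableEq m₂] (k₀ : m₁) {Φ : MatMap n m₂} (h : IsCP Φ) :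
    IsCP ((kronLeft (Matrix.single k₀ k₀ 1) : Matrix m₂ m₂ ℂ →ₗ[ℂ] _) ∘ₗ Φ) := by
  rw [kronLeft_std_eq]; exact isCP_comp_kraus _ h

lemma two_inv_nonneg : (0:ℂ) ≤ ((2:ℝ):ℂ)⁻¹ := by
  rw [← Complex.ofReal_inv]
  exact Complex.zero_le_real.mpr (by norm_num)

/-- The trash-and-prepare noise instrument concentrated on outcome `x₀`. -/
def noiseInst [Fintype ι] [DecidableEq ι] [Fintype n] [DecidableEq n] [Fintype m]
    [DecidableEq m] (x₀ : ι) (k₀ : m) : Instrument ι n m where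
  op x := if x = x₀ then trashPrep (Matrix.single k₀ k₀ 1) else 0
  cp x := by by_cases hx : x = x₀ <;> simp [hx, isCP_trashPrep_std, isCP_zero]
  tp := by
    rw [Finset.sum_ite_eq' Finset.univ x₀]
    simp only [Finset.mem_univ, if_true]
    intro ρ
    simp [trashPrep, Matrix.trace_smul, Matrix.trace_single_eq_same]

/-- The joint instrument interpolating between the two given instruments. -/
def jointInst [Fintype ι₁] [DecidableEq ι₁] [Fintype ι₂] [DecidableEq ι₂]
    [Fintype n] [DecidableEq n] [Fintype m₁] [DecidableEq m₁] [Fintype m₂] [DecidableEq m₂]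
    (I₁ : Instrument ι₁ n m₁) (I₂ : Instrument ι₂ n m₂)
    (x₀ : ι₁) (y₀ : ι₂) (k₀ : m₁) (l₀ : m₂) : Instrument (ι₁ × ι₂) n (m₁ × m₂) where
  op p := ((2:ℝ):ℂ)⁻¹ •
    ((if p.2 = y₀ then kronRight (Matrix.single l₀ l₀ 1) ∘ₗ I₁.op p.1 else 0)
      + (if p.1 = x₀ then kronLeft (Matrix.single k₀ k₀ 1) ∘ₗ I₂.op p.2 else 0))
  cp p := by
    refine isCP_smul two_inv_nonneg (isCP_add ?_ ?_)
    · by_cases h : p.2 = y₀ <;>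
        simp [h, isCP_kronRight_comp l₀ (I₁.cp p.1), isCP_zero]
    · by_cases h : p.1 = x₀ <;>
        simp [h, isCP_kronLeft_comp k₀ (I₂.cp p.2), isCP_zero]
  tp := by
    intro ρ
    have e1 := I₁.tp ρ
    have e2 := I₂.tp ρ
    rw [LinearMap.sum_apply, Matrix.trace_sum] at e1 e2
    simp only [LinearMap.sum_apply, LinearMap.smul_apply, LinearMap.add_apply]
    rw [Matrix.trace_sum]
    have hterm : ∀ p : ι₁ × ι₂,
        (((2:ℝ):ℂ)⁻¹ • ((if p.2 = y₀ then kronRight (Matrix.single l₀ l₀ 1) ∘ₗ I₁.op p.1 else 0) ρ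
          + (if p.1 = x₀ then kronLeft (Matrix.single k₀ k₀ 1) ∘ₗ I₂.op p.2 else 0) ρ)).trace
        = ((2:ℝ):ℂ)⁻¹ * ((if p.2 = y₀ then (I₁.op p.1 ρ).trace else 0)
          + (if p.1 = x₀ then (I₂.op p.2 ρ).trace else 0)) := by
      rintro ⟨x, y⟩
      rw [Matrix.trace_smul, Matrix.trace_add, smul_eq_mul]
      congr 2
      · by_cases h : y = y₀ <;>
          simp [h, kronRight, Matrix.trace_kronecker, Matrix.trace_single_eq_same]
      · by_cases h : x = x₀ <;>
          simp [h, kronLeft, Matrix.trace_kronecker, Matrix.trace_single_eq_same]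
    rw [Finset.sum_congr rfl fun p _ => hterm p]
    rw [← Finset.mul_sum, Fintype.sum_prod_type]
    simp only [Finset.sum_add_distrib]
    have hA : (∑ x : ι₁, ∑ y : ι₂, if y = y₀ then (I₁.op x ρ).trace else 0) = ρ.trace := by
      simp only [Finset.sum_ite_eq', Finset.mem_univ, if_true]
      exact e1
    have hB : (∑ x : ι₁, ∑ y : ι₂, if x = x₀ then (I₂.op y ρ).trace else 0) = ρ.trace := by
      rw [Finset.sum_comm]
      simp only [Finset.sum_ite_eq', Finset.mem_univ, if_true]
      exact e2
    rw [hA, hB, ← Complex.ofReal_inv]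
    rw [show ρ.trace + ρ.trace = ((2:ℝ):ℂ) * ρ.trace by push_cast; ring]
    rw [← mul_assoc]
    norm_num
end QIAux
end
noncomputable section
namespace QIAux
open QI Matrix
open scoped Kronecker ComplexOrder

variable {n m m' m₁ m₂ ι ι₁ ι₂ : Type*}

lemma jointInst_marg₁ [Fintype ι₁] [DecidableEq ι₁] [Fintype ι₂] [DecidableEq ι₂]
    [Fintype n] [DecidableEq n] [Fintype m₁] [DecidableEq m₁] [Fintype m₂] [DecidableEq m₂]
    (I₁ : Instrument ι₁ n m₁) (I₂ : Instrument ι₂ n m₂)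
    (x₀ : ι₁) (y₀ : ι₂) (k₀ : m₁) (l₀ : m₂) (x : ι₁) :
    ((1 + (1:ℝ) : ℝ) : ℂ)⁻¹ • (I₁.op x + ((1:ℝ) : ℂ) • (noiseInst x₀ k₀ : Instrument ι₁ n m₁).op x)
      = ∑ y, ptrace₂ ∘ₗ (jointInst I₁ I₂ x₀ y₀ k₀ l₀).op (x, y) := by
  classical
  apply LinearMap.ext; intro ρ
  have e2 := I₂.tp ρ
  rw [LinearMap.sum_apply, Matrix.trace_sum] at e2
  simp only [jointInst, noiseInst, LinearMap.sum_apply, LinearMap.comp_apply,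
    LinearMap.smul_apply, LinearMap.add_apply, _root_.map_smul, _root_.map_add]
  have hA : ∀ y : ι₂, ptrace₂
      (((if y = y₀ then kronRight (Matrix.single l₀ l₀ 1) ∘ₗ I₁.op x else 0)) ρ)
      = if y = y₀ then I₁.op x ρ else 0 := by
    intro y
    by_cases h : y = y₀ <;>
      simp [h, kronRight, ptrace₂_kron, Matrix.trace_single_eq_same]
  have hB : ∀ y : ι₂, ptrace₂
      (((if x = x₀ then kronLeft (Matrix.single k₀ k₀ 1) ∘ₗ I₂.op y else 0)) ρ)
      = if x = x₀ then (I₂.op y ρ).trace • Matrix.single k₀ k₀ 1 else 0 := by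
    intro y
    by_cases h : x = x₀ <;>
      simp [h, kronLeft, ptrace₂_kron]
  simp only [hA, hB]
  rw [← Finset.smul_sum, Finset.sum_add_distrib]
  rw [Finset.sum_ite_eq' Finset.univ y₀]
  simp only [Finset.mem_univ, if_true]
  have h2 : ((1 + (1:ℝ) : ℝ) : ℂ)⁻¹ = ((2:ℝ):ℂ)⁻¹ := by norm_num
  rw [h2]
  by_cases hx : x = x₀
  · simp only [hx, if_true, ← Finset.sum_smul, e2]
    rw [show (((1:ℝ):ℂ)) • ((trashPrep (Matrix.single k₀ k₀ 1) : MatMap n m₁) ρ)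
        = ρ.trace • Matrix.single k₀ k₀ 1 by
      simp [trashPrep]]
  · simp only [hx, if_false, Finset.sum_const_zero, add_zero, smul_zero]
    rw [show (((1:ℝ):ℂ)) • ((0 : MatMap n m₁) ρ) = 0 by simp]
    rw [add_zero]

lemma jointInst_marg₂ [Fintype ι₁] [DecidableEq ι₁] [Fintype ι₂] [DecidableEq ι₂]
    [Fintype n] [DecidableEq n] [Fintype m₁] [DecidableEq m₁] [Fintype m₂] [DecidableEq m₂]
    (I₁ : Instrument ι₁ n m₁) (I₂ : Instrument ι₂ n m₂)
    (x₀ : ι₁) (y₀ : ι₂) (k₀ : m₁) (l₀ : m₂) (y : ι₂) :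
    ((1 + (1:ℝ) : ℝ) : ℂ)⁻¹ • (I₂.op y + ((1:ℝ) : ℂ) • (noiseInst y₀ l₀ : Instrument ι₂ n m₂).op y)
      = ∑ x, ptrace₁ ∘ₗ (jointInst I₁ I₂ x₀ y₀ k₀ l₀).op (x, y) := by
  classical
  apply LinearMap.ext; intro ρ
  have e1 := I₁.tp ρ
  rw [LinearMap.sum_apply, Matrix.trace_sum] at e1
  simp only [jointInst, noiseInst, LinearMap.sum_apply, LinearMap.comp_apply,
    LinearMap.smul_apply, LinearMap.add_apply, _root_.map_smul, _root_.map_add]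
  have hA : ∀ x : ι₁, ptrace₁
      (((if y = y₀ then kronRight (Matrix.single l₀ l₀ 1) ∘ₗ I₁.op x else 0)) ρ)
      = if y = y₀ then (I₁.op x ρ).trace • Matrix.single l₀ l₀ 1 else 0 := by
    intro x
    by_cases h : y = y₀ <;>
      simp [h, kronRight, ptrace₁_kron]
  have hB : ∀ x : ι₁, ptrace₁
      (((if x = x₀ then kronLeft (Matrix.single k₀ k₀ 1) ∘ₗ I₂.op y else 0)) ρ)
      = if x = x₀ then I₂.op y ρ else 0 := by
    intro x
    by_cases h : x = x₀ <;>
      simp [h, kronLeft, ptrace₁_kron, Matrix.trace_single_eq_same]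
  simp only [hA, hB]
  rw [← Finset.smul_sum, Finset.sum_add_distrib]
  rw [Finset.sum_ite_eq' Finset.univ x₀]
  simp only [Finset.mem_univ, if_true]
  have h2 : ((1 + (1:ℝ) : ℝ) : ℂ)⁻¹ = ((2:ℝ):ℂ)⁻¹ := by norm_num
  rw [h2]
  by_cases hy : y = y₀
  · simp only [hy, if_true, ← Finset.sum_smul, e1]
    rw [show (((1:ℝ):ℂ)) • ((trashPrep (Matrix.single l₀ l₀ 1) : MatMap n m₂) ρ)
        = ρ.trace • Matrix.single l₀ l₀ 1 by
      simp [trashPrep]]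
    rw [add_comm]
  · simp only [hy, if_false, Finset.sum_const_zero, smul_zero]
    rw [show (((1:ℝ):ℂ)) • ((0 : MatMap n m₂) ρ) = 0 by simp]
    rw [add_zero, zero_add]
end QIAux
end
noncomputable section
namespace QIAux
open QI Matrix
open scoped Kronecker ComplexOrder

variable {n m m₁ m₂ ι ι₁ ι₂ : Type*}

lemma SI_nonempty [Fintype ι₁] [Fintype ι₂] [Fintype n] [DecidableEq n]
    [Fintype m₁] [DecidableEq m₁] [Fintype m₂] [DecidableEq m₂]
    (I₁ : Instrument ι₁ n m₁) (I₂ : Instrument ι₂ n m₂) :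
    ∃ r : ℝ, 0 ≤ r ∧
    ∃ (N₁ : Instrument ι₁ n m₁) (N₂ : Instrument ι₂ n m₂)
      (J : Instrument (ι₁ × ι₂) n (m₁ × m₂)),
      (∀ x, ((1 + r : ℝ) : ℂ)⁻¹ • (I₁.op x + (r : ℂ) • N₁.op x)
          = ∑ y, ptrace₂ ∘ₗ J.op (x, y)) ∧
      (∀ y, ((1 + r : ℝ) : ℂ)⁻¹ • (I₂.op y + (r : ℂ) • N₂.op y)
          = ∑ x, ptrace₁ ∘ₗ J.op (x, y)) := by
  classical
  rcases isEmpty_or_nonempty n with hn | hn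
  · have hzero : ∀ ρ : Matrix n n ℂ, ρ = 0 := by
      intro ρ; ext i j; exact (IsEmpty.false i).elim
    refine ⟨0, le_rfl, I₁, I₂,
      ⟨fun _ => 0, fun _ => isCP_zero, ?_⟩, ?_, ?_⟩
    · intro ρ
      rw [hzero ρ]
      simp
    · intro x
      have h0 : I₁.op x = 0 := by
        apply LinearMap.ext; intro ρ; rw [hzero ρ, map_zero]; rfl
      simp [h0]
    · intro y
      have h0 : I₂.op y = 0 := by
        apply LinearMap.ext; intro ρ; rw [hzero ρ, map_zero]; rfl
      simp [h0]
  · have hcard : ((Fintype.card n : ℂ)) ≠ 0 :=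
      Nat.cast_ne_zero.mpr Fintype.card_ne_zero
    have hι₁ : Nonempty ι₁ := by
      by_contra h
      haveI := not_nonempty_iff.mp h
      have h1 := I₁.tp 1
      simp only [Finset.univ_eq_empty, Finset.sum_empty, LinearMap.zero_apply,
        Matrix.trace_zero, Matrix.trace_one] at h1
      exact hcard h1.symm
    have hι₂ : Nonempty ι₂ := by
      by_contra h
      haveI := not_nonempty_iff.mp h
      have h1 := I₂.tp 1
      simp only [Finset.univ_eq_empty, Finset.sum_empty, LinearMap.zero_apply,
        Matrix.trace_zero, Matrix.trace_one] at h1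
      exact hcard h1.symm
    have hm₁ : Nonempty m₁ := by
      by_contra h
      haveI := not_nonempty_iff.mp h
      have h1 := I₁.tp 1
      rw [Matrix.trace_one] at h1
      have h2 : ((∑ x, I₁.op x) 1).trace = 0 := by
        simp [Matrix.trace, Finset.univ_eq_empty]
      rw [h2] at h1
      exact hcard h1.symm
    have hm₂ : Nonempty m₂ := by
      by_contra h
      haveI := not_nonempty_iff.mp h
      have h1 := I₂.tp 1
      rw [Matrix.trace_one] at h1
      have h2 : ((∑ x, I₂.op x) 1).trace = 0 := by
        simp [Matrix.trace, Finset.univ_eq_empty]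
      rw [h2] at h1
      exact hcard h1.symm
    obtain ⟨x₀⟩ := hι₁
    obtain ⟨y₀⟩ := hι₂
    obtain ⟨k₀⟩ := hm₁
    obtain ⟨l₀⟩ := hm₂
    exact ⟨1, zero_le_one, noiseInst x₀ k₀, noiseInst y₀ l₀, jointInst I₁ I₂ x₀ y₀ k₀ l₀,
      fun x => jointInst_marg₁ I₁ I₂ x₀ y₀ k₀ l₀ x,
      fun y => jointInst_marg₂ I₁ I₂ x₀ y₀ k₀ l₀ y⟩

end QIAux
end
open QI in
/-- `R_I(I₁,I₂) ≥ R_M(A₁,A₂)` for the induced POVMs. -/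
theorem RI_ge_RM {ι₁ ι₂ n m₁ m₂ : Type*}
    [Fintype ι₁] [Fintype ι₂] [Fintype n] [DecidableEq n]
    [Fintype m₁] [DecidableEq m₁] [Fintype m₂] [DecidableEq m₂]
    (I₁ : Instrument ι₁ n m₁) (I₂ : Instrument ι₂ n m₂) :
    RM (inducedPOVM I₁) (inducedPOVM I₂) ≤ RI I₁ I₂ := by
  classical
  rw [RM, RI]
  apply csInf_le_csInf
  · exact ⟨0, fun r hr => hr.1⟩
  · obtain ⟨r, h⟩ := QIAux.SI_nonempty I₁ I₂
    exact ⟨r, h⟩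
  · rintro r ⟨hr0, N₁, N₂, J, h1, h2⟩
    refine ⟨hr0, inducedPOVM N₁, inducedPOVM N₂, fun p => dualMap (J.op p) 1,
      QIAux.isPOVM_inducedPOVM N₁, QIAux.isPOVM_inducedPOVM N₂,
      fun p => QIAux.dualMap_one_posSemidef (J.cp p), ?_, ?_⟩
    · intro x
      have h := congrArg (fun Φ : MatMap n m₁ => dualMap Φ 1) (h1 x)
      simp only [QIAux.dualMap_smul, QIAux.dualMap_add, QIAux.dualMap_sum,
        QIAux.dualMap_ptrace₂] at h
      simpa [inducedPOVM] using h
    · intro y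
      have h := congrArg (fun Φ : MatMap n m₂ => dualMap Φ 1) (h2 y)
      simp only [QIAux.dualMap_smul, QIAux.dualMap_add, QIAux.dualMap_sum,
        QIAux.dualMap_ptrace₁] at h
      simpa [inducedPOVM] using h
end

section
/- The generalized incompatibility robustness of any pair of instruments is lower bounded by the generalized incompatibility robustness of their induced channels: R_I(I₁,I₂) ≥ R_C(Φ¹,Φ²), where Φ¹ = Σ_x Φ¹_x and Φ² = Σ_y Φ²_y. -/
open Matrix
open scoped Kronecker BigOperators ComplexOrder

noncomputable section AuxRIgeRC
open QI Matrix
open scoped Kronecker ComplexOrder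

namespace AuxRIgeRC

variable {ι n m m₁ m₂ : Type*}

lemma kron_psd [Fintype n] [Fintype m] {A : Matrix n n ℂ} {B : Matrix m m ℂ}
    (hA : A.PosSemidef) (hB : B.PosSemidef) : (A ⊗ₖ B).PosSemidef := by
  classical
  exact hA.kronecker hB

lemma psd_real_smul [Fintype n] {M : Matrix n n ℂ} (hM : M.PosSemidef) {r : ℝ} (hr : 0 ≤ r) :
    (((r : ℝ) : ℂ) • M).PosSemidef := by
  constructor
  · unfold Matrix.IsHermitian
    rw [Matrix.conjTranspose_smul, hM.1.eq]
    congr 1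
    simp [Complex.star_def, Complex.conj_ofReal]
  · exact (hM.smul (Complex.zero_le_real.mpr hr)).2

lemma choi_zero [Fintype n] [DecidableEq n] [Fintype m] : choi (0 : MatMap n m) = 0 := by
  ext p q; simp [choi]

lemma choi_add [Fintype n] [DecidableEq n] [Fintype m] (Φ Ψ : MatMap n m) :
    choi (Φ + Ψ) = choi Φ + choi Ψ := by
  ext p q; simp [choi]

lemma choi_smul [Fintype n] [DecidableEq n] [Fintype m] (c : ℂ) (Φ : MatMap n m) :
    choi (c • Φ) = c • choi Φ := by
  ext p q; simp [choi]

lemma isCP_zero [Fintype n] [DecidableEq n] [Fintype m] : IsCP (0 : MatMap n m) := by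
  rw [IsCP, choi_zero]; exact .zero

lemma isCP_add [Fintype n] [DecidableEq n] [Fintype m] {Φ Ψ : MatMap n m}
    (h1 : IsCP Φ) (h2 : IsCP Ψ) : IsCP (Φ + Ψ) := by
  rw [IsCP, choi_add]; exact h1.add h2

lemma isCP_sum [Fintype n] [DecidableEq n] [Fintype m] [Fintype ι] {f : ι → MatMap n m}
    (h : ∀ x, IsCP (f x)) : IsCP (∑ x, f x) := by
  classical
  exact Finset.sum_induction f IsCP (fun a b ha hb => isCP_add ha hb) isCP_zero
    (fun x _ => h x)

lemma isCP_real_smul [Fintype n] [DecidableEq n] [Fintype m] {Φ : MatMap n m}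
    {r : ℝ} (hr : 0 ≤ r) (h : IsCP Φ) : IsCP (((r : ℝ) : ℂ) • Φ) := by
  rw [IsCP, choi_smul]; exact psd_real_smul h hr

lemma trace_std [Fintype n] [DecidableEq n] (i j : n) :
    (Matrix.single i j (1 : ℂ)).trace = if i = j then 1 else 0 := by
  by_cases h : i = j
  · subst h; simp [Matrix.trace, Matrix.single, Matrix.diag]
  · simp only [Matrix.trace, Matrix.single, Matrix.diag, Matrix.of_apply, if_neg h]
    rw [Finset.sum_eq_zero]
    intro k _
    by_cases hik : i = k
    · subst hik
      simp
      rintro rfl; exact h rfl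
    · simp [hik]

lemma choi_trashPrep [Fintype n] [DecidableEq n] [Fintype m] (η : Matrix m m ℂ) :
    choi (trashPrep η : MatMap n m) = (1 : Matrix n n ℂ) ⊗ₖ η := by
  ext ⟨i, k⟩ ⟨j, l⟩
  simp only [choi, trashPrep, Matrix.of_apply, LinearMap.smulRight_apply,
    Matrix.traceLinearMap_apply, Matrix.smul_apply, Matrix.kroneckerMap_apply,
    Matrix.one_apply, smul_eq_mul, trace_std]

lemma isCP_trashPrep [Fintype n] [DecidableEq n] [Fintype m] {η : Matrix m m ℂ}
    (hη : η.PosSemidef) : IsCP (trashPrep η : MatMap n m) := by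
  rw [IsCP, choi_trashPrep]
  exact kron_psd .one hη

lemma choi_kronRight_comp [Fintype n] [DecidableEq n] [Fintype m₁] [Fintype m₂]
    (Φ : MatMap n m₁) (B : Matrix m₂ m₂ ℂ) :
    choi ((kronRight B : Matrix m₁ m₁ ℂ →ₗ[ℂ] Matrix (m₁ × m₂) (m₁ × m₂) ℂ) ∘ₗ Φ)
      = ((choi Φ) ⊗ₖ B).submatrix (fun p => ((p.1, p.2.1), p.2.2))
          (fun p => ((p.1, p.2.1), p.2.2)) := by
  ext ⟨i, k, l⟩ ⟨j, k', l'⟩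
  simp [choi, kronRight, Matrix.submatrix_apply, Matrix.kroneckerMap_apply]

lemma choi_kronLeft_comp [Fintype n] [DecidableEq n] [Fintype m₁] [Fintype m₂]
    (Φ : MatMap n m₂) (A : Matrix m₁ m₁ ℂ) :
    choi ((kronLeft A : Matrix m₂ m₂ ℂ →ₗ[ℂ] Matrix (m₁ × m₂) (m₁ × m₂) ℂ) ∘ₗ Φ)
      = (A ⊗ₖ (choi Φ)).submatrix (fun p => (p.2.1, (p.1, p.2.2)))
          (fun p => (p.2.1, (p.1, p.2.2))) := by
  ext ⟨i, k, l⟩ ⟨j, k', l'⟩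
  simp [choi, kronLeft, Matrix.submatrix_apply, Matrix.kroneckerMap_apply, mul_comm]

lemma isCP_kronRight_comp [Fintype n] [DecidableEq n] [Fintype m₁] [Fintype m₂]
    {Φ : MatMap n m₁} (hΦ : IsCP Φ) {B : Matrix m₂ m₂ ℂ} (hB : B.PosSemidef) :
    IsCP ((kronRight B : Matrix m₁ m₁ ℂ →ₗ[ℂ] Matrix (m₁ × m₂) (m₁ × m₂) ℂ) ∘ₗ Φ) := by
  rw [IsCP, choi_kronRight_comp]
  exact (kron_psd hΦ hB).submatrix _

lemma isCP_kronLeft_comp [Fintype n] [DecidableEq n] [Fintype m₁] [Fintype m₂]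
    {Φ : MatMap n m₂} (hΦ : IsCP Φ) {A : Matrix m₁ m₁ ℂ} (hA : A.PosSemidef) :
    IsCP ((kronLeft A : Matrix m₂ m₂ ℂ →ₗ[ℂ] Matrix (m₁ × m₂) (m₁ × m₂) ℂ) ∘ₗ Φ) := by
  rw [IsCP, choi_kronLeft_comp]
  exact (kron_psd hA hΦ).submatrix _

lemma ptrace₂_kron [Fintype m₁] [Fintype m₂] (A : Matrix m₁ m₁ ℂ) (B : Matrix m₂ m₂ ℂ) :
    ptrace₂ (A ⊗ₖ B) = B.trace • A := by
  ext i j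
  simp [ptrace₂, Matrix.trace, Matrix.diag, Matrix.kroneckerMap_apply, Finset.mul_sum,
    mul_comm]

lemma ptrace₁_kron [Fintype m₁] [Fintype m₂] (A : Matrix m₁ m₁ ℂ) (B : Matrix m₂ m₂ ℂ) :
    ptrace₁ (A ⊗ₖ B) = A.trace • B := by
  ext i j
  simp [ptrace₁, Matrix.trace, Matrix.diag, Matrix.kroneckerMap_apply, Finset.sum_mul]

lemma comp_sum {n' : Type*} [Fintype n] [Fintype m] [Fintype n'] [Fintype ι]
    (f : Matrix m m ℂ →ₗ[ℂ] Matrix n' n' ℂ) (g : ι → MatMap n m) :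
    f ∘ₗ (∑ x, g x) = ∑ x, f ∘ₗ g x := by
  apply LinearMap.ext; intro ρ
  simp [LinearMap.sum_apply, map_sum]

lemma inst_nonempty {ι' n' m' : Type*} [Fintype ι'] [Fintype n'] [DecidableEq n'] [Fintype m']
    [Nonempty n'] (I : Instrument ι' n' m') : Nonempty ι' ∧ Nonempty m' := by
  classical
  have h := I.tp 1
  rw [Matrix.trace_one] at h
  constructor
  · by_contra hc
    haveI : IsEmpty ι' := not_nonempty_iff.mp hc
    rw [Finset.univ_eq_empty, Finset.sum_empty] at h
    simp only [LinearMap.zero_apply, Matrix.trace_zero] at h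
    exact Fintype.card_ne_zero (α := n') (by exact_mod_cast h.symm)
  · by_contra hc
    haveI : IsEmpty m' := not_nonempty_iff.mp hc
    have h0 : ((∑ x, I.op x) (1 : Matrix n' n' ℂ)).trace = 0 := by
      simp [Matrix.trace, Finset.univ_eq_empty]
    rw [h0] at h
    exact Fintype.card_ne_zero (α := n') (by exact_mod_cast h.symm)


@[simp] lemma kronRight_apply' [Fintype m₁] [Fintype m₂] (B : Matrix m₂ m₂ ℂ)
    (A : Matrix m₁ m₁ ℂ) : kronRight B A = A ⊗ₖ B := rfl

@[simp] lemma kronLeft_apply' [Fintype m₁] [Fintype m₂] (A : Matrix m₁ m₁ ℂ)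
    (B : Matrix m₂ m₂ ℂ) : kronLeft A B = A ⊗ₖ B := rfl

@[simp] lemma trashPrep_apply' [Fintype n] [Fintype m] (η : Matrix m m ℂ) (ρ : Matrix n n ℂ) :
    trashPrep η ρ = ρ.trace • η := rfl

lemma ri_witness {ι₁ ι₂ n m₁ m₂ : Type*}
    [Fintype ι₁] [Fintype ι₂] [Fintype n] [DecidableEq n] [Fintype m₁] [Fintype m₂]
    [Nonempty ι₁] [Nonempty ι₂] [Nonempty m₁] [Nonempty m₂]
    (I₁ : Instrument ι₁ n m₁) (I₂ : Instrument ι₂ n m₂) :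
    ∃ (N₁ : Instrument ι₁ n m₁) (N₂ : Instrument ι₂ n m₂)
      (J : Instrument (ι₁ × ι₂) n (m₁ × m₂)),
      (∀ x, ((1 + (1:ℝ) : ℝ) : ℂ)⁻¹ • (I₁.op x + ((1:ℝ) : ℂ) • N₁.op x)
          = ∑ y, ptrace₂ ∘ₗ J.op (x, y)) ∧
      (∀ y, ((1 + (1:ℝ) : ℝ) : ℂ)⁻¹ • (I₂.op y + ((1:ℝ) : ℂ) • N₂.op y)
          = ∑ x, ptrace₁ ∘ₗ J.op (x, y)) := by
  classical
  have hi₁c : ((Fintype.card ι₁ : ℂ)) ≠ 0 := Nat.cast_ne_zero.mpr Fintype.card_ne_zero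
  have hi₂c : ((Fintype.card ι₂ : ℂ)) ≠ 0 := Nat.cast_ne_zero.mpr Fintype.card_ne_zero
  have hm₁ : ((Fintype.card m₁ : ℝ)) ≠ 0 := Nat.cast_ne_zero.mpr Fintype.card_ne_zero
  have hm₂ : ((Fintype.card m₂ : ℝ)) ≠ 0 := Nat.cast_ne_zero.mpr Fintype.card_ne_zero
  have hi₁ : ((Fintype.card ι₁ : ℝ)) ≠ 0 := Nat.cast_ne_zero.mpr Fintype.card_ne_zero
  have hi₂ : ((Fintype.card ι₂ : ℝ)) ≠ 0 := Nat.cast_ne_zero.mpr Fintype.card_ne_zero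
  set η₁ : Matrix m₁ m₁ ℂ := (((Fintype.card m₁ : ℝ)⁻¹ : ℝ) : ℂ) • 1 with hη₁
  set η₂ : Matrix m₂ m₂ ℂ := (((Fintype.card m₂ : ℝ)⁻¹ : ℝ) : ℂ) • 1 with hη₂
  have hη₁psd : η₁.PosSemidef := psd_real_smul .one (inv_nonneg.mpr (Nat.cast_nonneg _))
  have hη₂psd : η₂.PosSemidef := psd_real_smul .one (inv_nonneg.mpr (Nat.cast_nonneg _))
  have htr₁ : η₁.trace = 1 := by
    rw [hη₁, Matrix.trace_smul, Matrix.trace_one]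
    push_cast
    simp only [smul_eq_mul]
    field_simp
  have htr₂ : η₂.trace = 1 := by
    rw [hη₂, Matrix.trace_smul, Matrix.trace_one]
    push_cast
    simp only [smul_eq_mul]
    field_simp
  refine ⟨⟨fun _ => (((Fintype.card ι₁ : ℝ)⁻¹ : ℝ) : ℂ) • trashPrep η₁,
      fun _ => isCP_real_smul (inv_nonneg.mpr (Nat.cast_nonneg _)) (isCP_trashPrep hη₁psd),
      ?_⟩,
    ⟨fun _ => (((Fintype.card ι₂ : ℝ)⁻¹ : ℝ) : ℂ) • trashPrep η₂,
      fun _ => isCP_real_smul (inv_nonneg.mpr (Nat.cast_nonneg _)) (isCP_trashPrep hη₂psd),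
      ?_⟩,
    ⟨fun p => (((2:ℝ)⁻¹ : ℝ) : ℂ) •
        ((kronRight ((((Fintype.card ι₂ : ℝ)⁻¹ : ℝ) : ℂ) • η₂) ∘ₗ I₁.op p.1)
          + (kronLeft ((((Fintype.card ι₁ : ℝ)⁻¹ : ℝ) : ℂ) • η₁) ∘ₗ I₂.op p.2)),
      fun p => isCP_real_smul (by norm_num)
        (isCP_add
          (isCP_kronRight_comp (I₁.cp p.1)
            (psd_real_smul hη₂psd (inv_nonneg.mpr (Nat.cast_nonneg _))))
          (isCP_kronLeft_comp (I₂.cp p.2)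
            (psd_real_smul hη₁psd (inv_nonneg.mpr (Nat.cast_nonneg _))))),
      ?_⟩, ?_, ?_⟩
  · -- N₁ trace preserving
    intro ρ
    have hterm : ∀ x : ι₁, (((((Fintype.card ι₁ : ℝ)⁻¹ : ℝ) : ℂ) • trashPrep η₁ : MatMap n m₁) ρ)
        = ((((Fintype.card ι₁ : ℝ)⁻¹ : ℝ) : ℂ) * ρ.trace) • η₁ := by
      intro x; simp [smul_smul]
    rw [LinearMap.sum_apply, Finset.sum_congr rfl (fun x _ => hterm x), Finset.sum_const,
      Finset.card_univ, Matrix.trace_smul, Matrix.trace_smul, htr₁, smul_eq_mul, mul_one,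
      nsmul_eq_mul]
    push_cast
    field_simp
  · -- N₂ trace preserving
    intro ρ
    have hterm : ∀ x : ι₂, (((((Fintype.card ι₂ : ℝ)⁻¹ : ℝ) : ℂ) • trashPrep η₂ : MatMap n m₂) ρ)
        = ((((Fintype.card ι₂ : ℝ)⁻¹ : ℝ) : ℂ) * ρ.trace) • η₂ := by
      intro x; simp [smul_smul]
    rw [LinearMap.sum_apply, Finset.sum_congr rfl (fun x _ => hterm x), Finset.sum_const,
      Finset.card_univ, Matrix.trace_smul, Matrix.trace_smul, htr₂, smul_eq_mul, mul_one,
      nsmul_eq_mul]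
    push_cast
    field_simp
  · -- J trace preserving
    intro ρ
    have hs1 : ∑ x, ((I₁.op x) ρ).trace = ρ.trace := by
      rw [← Matrix.trace_sum, ← LinearMap.sum_apply]; exact I₁.tp ρ
    have hs2 : ∑ y, ((I₂.op y) ρ).trace = ρ.trace := by
      rw [← Matrix.trace_sum, ← LinearMap.sum_apply]; exact I₂.tp ρ
    have hterm : ∀ p : ι₁ × ι₂,
        (((((2:ℝ)⁻¹ : ℝ) : ℂ) •
          ((kronRight ((((Fintype.card ι₂ : ℝ)⁻¹ : ℝ) : ℂ) • η₂) ∘ₗ I₁.op p.1)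
            + (kronLeft ((((Fintype.card ι₁ : ℝ)⁻¹ : ℝ) : ℂ) • η₁) ∘ₗ I₂.op p.2))
          : MatMap n (m₁ × m₂)) ρ).trace
        = ((I₁.op p.1) ρ).trace * ((((2:ℝ)⁻¹ : ℝ) : ℂ) * (((Fintype.card ι₂ : ℝ)⁻¹ : ℝ) : ℂ))
          + ((I₂.op p.2) ρ).trace * ((((2:ℝ)⁻¹ : ℝ) : ℂ) * (((Fintype.card ι₁ : ℝ)⁻¹ : ℝ) : ℂ)) := by
      intro p
      simp only [LinearMap.smul_apply, LinearMap.add_apply, LinearMap.comp_apply,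
        kronRight_apply', kronLeft_apply', Matrix.trace_smul, Matrix.trace_add,
        Matrix.trace_kronecker, htr₁, htr₂, smul_eq_mul]
      ring_nf
    have hsum1 : ∑ p : ι₁ × ι₂, ((I₁.op p.1) ρ).trace = (Fintype.card ι₂ : ℂ) * ρ.trace := by
      rw [Fintype.sum_prod_type]
      simp only [Finset.sum_const, Finset.card_univ, nsmul_eq_mul]
      rw [← Finset.mul_sum, hs1]
    have hsum2 : ∑ p : ι₁ × ι₂, ((I₂.op p.2) ρ).trace = (Fintype.card ι₁ : ℂ) * ρ.trace := by
      rw [Fintype.sum_prod_type]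
      simp only [Finset.sum_const, Finset.card_univ, nsmul_eq_mul, hs2]
    rw [LinearMap.sum_apply, Matrix.trace_sum, Finset.sum_congr rfl (fun p _ => hterm p),
      Finset.sum_add_distrib, ← Finset.sum_mul, ← Finset.sum_mul, hsum1, hsum2]
    push_cast
    field_simp
    ring
  · -- first margin
    intro x
    apply LinearMap.ext; intro ρ
    have hs2 : ∑ y, ((I₂.op y) ρ).trace = ρ.trace := by
      rw [← Matrix.trace_sum, ← LinearMap.sum_apply]; exact I₂.tp ρ
    simp only [LinearMap.sum_apply, LinearMap.comp_apply, LinearMap.smul_apply,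
      LinearMap.add_apply, kronRight_apply', kronLeft_apply', _root_.map_smul, _root_.map_add,
      ptrace₂_kron, trashPrep_apply', Matrix.trace_smul, htr₂, smul_eq_mul, mul_one]
    rw [← Finset.smul_sum, Finset.sum_add_distrib, Finset.sum_const, Finset.card_univ,
      ← Finset.sum_smul, hs2]
    match_scalars
    · push_cast
      field_simp
      norm_num
    · push_cast
      rw [show ((1:ℂ) + 1) = 2 by norm_num]
      ring
  · -- second margin
    intro y
    apply LinearMap.ext; intro ρ
    have hs1 : ∑ x, ((I₁.op x) ρ).trace = ρ.trace := by
      rw [← Matrix.trace_sum, ← LinearMap.sum_apply]; exact I₁.tp ρ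
    simp only [LinearMap.sum_apply, LinearMap.comp_apply, LinearMap.smul_apply,
      LinearMap.add_apply, kronRight_apply', kronLeft_apply', _root_.map_smul, _root_.map_add,
      ptrace₁_kron, trashPrep_apply', Matrix.trace_smul, htr₁, smul_eq_mul, mul_one]
    rw [← Finset.smul_sum, Finset.sum_add_distrib, Finset.sum_const, Finset.card_univ,
      ← Finset.sum_smul, hs1]
    match_scalars
    · push_cast
      field_simp
      norm_num
    · push_cast
      rw [show ((1:ℂ) + 1) = 2 by norm_num]
      ring


end AuxRIgeRC

end AuxRIgeRC

open QI in
/-- `R_I(I₁,I₂) ≥ R_C(Φ¹,Φ²)` for the induced channels. -/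
theorem RI_ge_RC {ι₁ ι₂ n m₁ m₂ : Type*}
    [Fintype ι₁] [Fintype ι₂] [Fintype n] [DecidableEq n] [Fintype m₁] [Fintype m₂]
    (I₁ : Instrument ι₁ n m₁) (I₂ : Instrument ι₂ n m₂) :
    RC (∑ x, I₁.op x) (∑ y, I₂.op y) ≤ RI I₁ I₂ := by
  classical
  open AuxRIgeRC in
  unfold RC RI
  apply csInf_le_csInf
  · exact ⟨0, fun r hr => hr.1⟩
  · -- RI feasible set is nonempty
    rcases isEmpty_or_nonempty n with hn | hn
    · -- trivial input space
      have hzero₁ : ∀ Φ : MatMap n m₁, Φ = 0 := by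
        intro Φ
        apply LinearMap.ext; intro ρ
        have hρ : ρ = 0 := by ext i j; exact (IsEmpty.false i).elim
        rw [hρ]; simp
      have hzero₂ : ∀ Φ : MatMap n m₂, Φ = 0 := by
        intro Φ
        apply LinearMap.ext; intro ρ
        have hρ : ρ = 0 := by ext i j; exact (IsEmpty.false i).elim
        rw [hρ]; simp
      refine ⟨0, le_refl 0, I₁, I₂,
        ⟨fun _ => 0, fun _ => AuxRIgeRC.isCP_zero, ?_⟩, ?_, ?_⟩
      · intro ρ
        have hρ : ρ.trace = 0 := by simp [Matrix.trace, Finset.univ_eq_empty]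
        simp [hρ]
      · intro x
        simp [hzero₁ (I₁.op x)]
      · intro y
        simp [hzero₂ (I₂.op y)]
    · -- nondegenerate case: r = 1 works via trash-and-prepare
      obtain ⟨hι₁, hm₁⟩ := AuxRIgeRC.inst_nonempty I₁
      obtain ⟨hι₂, hm₂⟩ := AuxRIgeRC.inst_nonempty I₂
      obtain ⟨N₁, N₂, J, hh1, hh2⟩ := AuxRIgeRC.ri_witness I₁ I₂
      exact ⟨1, zero_le_one, N₁, N₂, J, hh1, hh2⟩
  · -- the RI feasible set is contained in the RC feasible set
    rintro r ⟨hr0, N₁, N₂, J, h1, h2⟩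
    refine ⟨hr0, ∑ x, N₁.op x, ∑ y, N₂.op y, ∑ p, J.op p,
      ⟨AuxRIgeRC.isCP_sum N₁.cp, N₁.tp⟩, ⟨AuxRIgeRC.isCP_sum N₂.cp, N₂.tp⟩,
      ⟨AuxRIgeRC.isCP_sum J.cp, J.tp⟩, ?_, ?_⟩
    · rw [AuxRIgeRC.comp_sum, Fintype.sum_prod_type]
      have h : (∑ x, ∑ y, ptrace₂ ∘ₗ J.op (x, y))
          = ∑ x, ((1 + r : ℝ) : ℂ)⁻¹ • (I₁.op x + (r : ℂ) • N₁.op x) :=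
        Finset.sum_congr rfl fun x _ => (h1 x).symm
      rw [h, ← Finset.smul_sum, Finset.sum_add_distrib, ← Finset.smul_sum]
    · rw [AuxRIgeRC.comp_sum, Fintype.sum_prod_type_right]
      have h : (∑ y, ∑ x, ptrace₁ ∘ₗ J.op (x, y))
          = ∑ y, ((1 + r : ℝ) : ℂ)⁻¹ • (I₂.op y + (r : ℂ) • N₂.op y) :=
        Finset.sum_congr rfl fun y _ => (h2 y).symm
      rw [h, ← Finset.smul_sum, Finset.sum_add_distrib, ← Finset.smul_sum]
end

section
/- For any two quantum instruments I₁ ∈ In(Ω₁,H,K₁) and I₂ ∈ In(Ω₂,H,K₂), the generalized incompatibility robustness satisfies R_I(I₁,I₂) ≤ 1. In particular, for fixed pure states η₁ ∈ S(K₁), η₂ ∈ S(K₂), the instruments with operations (Φ¹_x(ρ) + tr(ρ)η₁/|Ω₁|)/2 and (Φ²_y(ρ) + tr(ρ)η₂/|Ω₂|)/2 are parallel compatible. -/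
open Matrix
open scoped Kronecker BigOperators ComplexOrder

noncomputable section
namespace QI
open Matrix
open scoped Kronecker ComplexOrder

variable {n m m₁ m₂ : Type*}

lemma kron_conjT [Fintype m₁] [Fintype m₂] (A : Matrix m₁ m₁ ℂ) (B : Matrix m₂ m₂ ℂ) :
    (A ⊗ₖ B)ᴴ = Aᴴ ⊗ₖ Bᴴ := by
  ext ⟨i,k⟩ ⟨j,l⟩
  simp [conjTranspose_apply, Matrix.kroneckerMap_apply, mul_comm]

lemma psd_kron [Fintype m₁] [Fintype m₂] {A : Matrix m₁ m₁ ℂ} {B : Matrix m₂ m₂ ℂ}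
    (hA : A.PosSemidef) (hB : B.PosSemidef) : (A ⊗ₖ B).PosSemidef := by
  exact hA.kronecker hB

lemma psd_smul_real {c : ℝ} (hc : 0 ≤ c) {A : Matrix m m ℂ} [Fintype m]
    (hA : A.PosSemidef) : ((c:ℂ) • A).PosSemidef := by
  refine Matrix.PosSemidef.of_dotProduct_mulVec_nonneg ?_ ?_
  · rw [IsHermitian, conjTranspose_smul, hA.1, Complex.star_def, Complex.conj_ofReal]
  · intro x
    rw [smul_mulVec, dotProduct_smul, smul_eq_mul]
    exact mul_nonneg (by exact_mod_cast hc) (hA.dotProduct_mulVec_nonneg x)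

lemma choi_add [Fintype n] [DecidableEq n] [Fintype m] (Φ Ψ : MatMap n m) :
    choi (Φ + Ψ) = choi Φ + choi Ψ := by
  ext p q; simp [choi]

lemma choi_smul [Fintype n] [DecidableEq n] [Fintype m] (c : ℂ) (Φ : MatMap n m) :
    choi (c • Φ) = c • choi Φ := by
  ext p q; simp [choi]

lemma IsCP.add' [Fintype n] [DecidableEq n] [Fintype m] {Φ Ψ : MatMap n m}
    (hΦ : IsCP Φ) (hΨ : IsCP Ψ) : IsCP (Φ + Ψ) := by
  rw [IsCP, choi_add]; exact hΦ.add hΨ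

lemma IsCP.smul_real [Fintype n] [DecidableEq n] [Fintype m] {c : ℝ} (hc : 0 ≤ c)
    {Φ : MatMap n m} (hΦ : IsCP Φ) : IsCP ((c:ℂ) • Φ) := by
  rw [IsCP, choi_smul]; exact psd_smul_real hc hΦ

lemma trashPrep_apply [Fintype n] [Fintype m] (η : Matrix m m ℂ) (ρ : Matrix n n ℂ) :
    trashPrep η ρ = ρ.trace • η := rfl

lemma kronRight_apply [Fintype m₁] [Fintype m₂] (B : Matrix m₂ m₂ ℂ) (A : Matrix m₁ m₁ ℂ) :
    kronRight B A = A ⊗ₖ B := rfl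

lemma kronLeft_apply [Fintype m₁] [Fintype m₂] (A : Matrix m₁ m₁ ℂ) (B : Matrix m₂ m₂ ℂ) :
    kronLeft A B = A ⊗ₖ B := rfl

lemma choi_trashPrep [Fintype n] [DecidableEq n] [Fintype m] (σ : Matrix m m ℂ) :
    choi (trashPrep σ : MatMap n m) = (1 : Matrix n n ℂ) ⊗ₖ σ := by
  ext ⟨i,a⟩ ⟨j,b⟩
  simp only [choi, of_apply, trashPrep_apply, Matrix.smul_apply, kroneckerMap_apply, one_apply,
    smul_eq_mul]
  rcases eq_or_ne i j with rfl | h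
  · simp [Matrix.trace_single_eq_same]
  · simp [Matrix.trace_single_eq_of_ne (h := h), h]

lemma isCP_trashPrep [Fintype n] [DecidableEq n] [Fintype m] {σ : Matrix m m ℂ}
    (hσ : σ.PosSemidef) : IsCP (trashPrep σ : MatMap n m) := by
  rw [IsCP, choi_trashPrep]; exact psd_kron Matrix.PosSemidef.one hσ

lemma isCP_kronRight [Fintype n] [DecidableEq n] [Fintype m₁] [Fintype m₂]
    {B : Matrix m₂ m₂ ℂ} (hB : B.PosSemidef) {Φ : MatMap n m₁} (hΦ : IsCP Φ) :
    IsCP (kronRight B ∘ₗ Φ) := by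
  have h : choi (kronRight B ∘ₗ Φ)
      = (choi Φ ⊗ₖ B).submatrix (fun p : n × (m₁ × m₂) => ((p.1, p.2.1), p.2.2))
          (fun p => ((p.1, p.2.1), p.2.2)) := by
    ext ⟨i,a,b⟩ ⟨j,c,d⟩
    simp [choi, kronRight, Matrix.kroneckerMap_apply]
  rw [IsCP, h]
  exact (psd_kron hΦ hB).submatrix _

lemma isCP_kronLeft [Fintype n] [DecidableEq n] [Fintype m₁] [Fintype m₂]
    {A : Matrix m₁ m₁ ℂ} (hA : A.PosSemidef) {Φ : MatMap n m₂} (hΦ : IsCP Φ) :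
    IsCP (kronLeft A ∘ₗ Φ) := by
  have h : choi (kronLeft A ∘ₗ Φ)
      = (A ⊗ₖ choi Φ).submatrix (fun p : n × (m₁ × m₂) => (p.2.1, (p.1, p.2.2)))
          (fun p => (p.2.1, (p.1, p.2.2))) := by
    ext ⟨i,a,b⟩ ⟨j,c,d⟩
    simp [choi, kronLeft, Matrix.kroneckerMap_apply]
  rw [IsCP, h]
  exact (psd_kron hA hΦ).submatrix _

lemma ptrace₂_kron [Fintype m₁] [Fintype m₂] (A : Matrix m₁ m₁ ℂ) (B : Matrix m₂ m₂ ℂ) :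
    ptrace₂ (A ⊗ₖ B) = B.trace • A := by
  ext i j
  simp [ptrace₂, Matrix.trace, Matrix.diag, kroneckerMap_apply, ← Finset.mul_sum, mul_comm]

lemma ptrace₁_kron [Fintype m₁] [Fintype m₂] (A : Matrix m₁ m₁ ℂ) (B : Matrix m₂ m₂ ℂ) :
    ptrace₁ (A ⊗ₖ B) = A.trace • B := by
  ext i j
  simp [ptrace₁, Matrix.trace, Matrix.diag, kroneckerMap_apply, ← Finset.sum_mul]

lemma trace_ptrace₂ [Fintype m₁] [Fintype m₂] (M : Matrix (m₁ × m₂) (m₁ × m₂) ℂ) :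
    (ptrace₂ M).trace = M.trace := by
  simp [ptrace₂, Matrix.trace, Matrix.diag, Fintype.sum_prod_type]

lemma IsPureState.posSemidef [Fintype m] {η : Matrix m m ℂ} (h : IsPureState η) :
    η.PosSemidef := by
  obtain ⟨v, hv, rfl⟩ := h
  refine Matrix.PosSemidef.of_dotProduct_mulVec_nonneg ?_ ?_
  · ext i j
    simp only [conjTranspose_apply, vecMulVec_apply, Pi.star_apply, star_mul', star_star]
    ring
  · intro x
    have key : star x ⬝ᵥ ((Matrix.vecMulVec v (star v)) *ᵥ x)
        = star (∑ j, star (v j) * x j) * (∑ j, star (v j) * x j) := by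
      simp only [dotProduct, mulVec, vecMulVec_apply, Pi.star_apply, star_sum, star_mul',
        star_star, Finset.sum_mul, Finset.mul_sum]
      rw [Finset.sum_comm]
      refine Finset.sum_congr rfl fun i _ => Finset.sum_congr rfl fun j _ => by ring
    rw [key]
    exact star_mul_self_nonneg _

lemma IsPureState.trace_eq_one [Fintype m] {η : Matrix m m ℂ} (h : IsPureState η) :
    η.trace = 1 := by
  obtain ⟨v, hv, rfl⟩ := h
  rw [← hv]
  simp [Matrix.trace, Matrix.diag, vecMulVec_apply, mul_comm]

end QI
end


open QI in
/-- `R_I(I₁,I₂) ≤ 1`, witnessed by admixing trash-and-prepare noise. -/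
theorem RI_le_one {ι₁ ι₂ n m₁ m₂ : Type*}
    [Fintype ι₁] [Nonempty ι₁] [Fintype ι₂] [Nonempty ι₂]
    [Fintype n] [DecidableEq n] [Fintype m₁] [Fintype m₂]
    (I₁ : Instrument ι₁ n m₁) (I₂ : Instrument ι₂ n m₂)
    (η₁ : Matrix m₁ m₁ ℂ) (η₂ : Matrix m₂ m₂ ℂ)
    (h₁ : IsPureState η₁) (h₂ : IsPureState η₂) :
    RI I₁ I₂ ≤ 1 ∧
    ∃ (N₁ : Instrument ι₁ n m₁) (N₂ : Instrument ι₂ n m₂),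
      (∀ x, N₁.op x
        = (2 : ℂ)⁻¹ • (I₁.op x + trashPrep ((Fintype.card ι₁ : ℂ)⁻¹ • η₁))) ∧
      (∀ y, N₂.op y
        = (2 : ℂ)⁻¹ • (I₂.op y + trashPrep ((Fintype.card ι₂ : ℂ)⁻¹ • η₂))) ∧
      ParallelCompatible N₁ N₂ := by
    classical
  have hk₁ : (Fintype.card ι₁ : ℂ) ≠ 0 := Nat.cast_ne_zero.2 Fintype.card_ne_zero
  have hk₂ : (Fintype.card ι₂ : ℂ) ≠ 0 := Nat.cast_ne_zero.2 Fintype.card_ne_zero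
  set σ₁ : Matrix m₁ m₁ ℂ := (Fintype.card ι₁ : ℂ)⁻¹ • η₁ with hσ₁def
  set σ₂ : Matrix m₂ m₂ ℂ := (Fintype.card ι₂ : ℂ)⁻¹ • η₂ with hσ₂def
  have hcast₁ : ((((Fintype.card ι₁ : ℝ))⁻¹ : ℝ) : ℂ) = (Fintype.card ι₁ : ℂ)⁻¹ := by
    push_cast; ring
  have hcast₂ : ((((Fintype.card ι₂ : ℝ))⁻¹ : ℝ) : ℂ) = (Fintype.card ι₂ : ℂ)⁻¹ := by
    push_cast; ring
  have hσ₁ : σ₁.PosSemidef := by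
    rw [hσ₁def, ← hcast₁]; exact psd_smul_real (by positivity) h₁.posSemidef
  have hσ₂ : σ₂.PosSemidef := by
    rw [hσ₂def, ← hcast₂]; exact psd_smul_real (by positivity) h₂.posSemidef
  have hσ₁tr : σ₁.trace = (Fintype.card ι₁ : ℂ)⁻¹ := by
    rw [hσ₁def, trace_smul, h₁.trace_eq_one, smul_eq_mul, mul_one]
  have hσ₂tr : σ₂.trace = (Fintype.card ι₂ : ℂ)⁻¹ := by
    rw [hσ₂def, trace_smul, h₂.trace_eq_one, smul_eq_mul, mul_one]
  have trsum₁ : ∀ ρ : Matrix n n ℂ, ∑ x, ((I₁.op x) ρ).trace = ρ.trace := by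
    intro ρ
    have := I₁.tp ρ
    simpa [LinearMap.sum_apply, Matrix.trace_sum] using this
  have trsum₂ : ∀ ρ : Matrix n n ℂ, ∑ y, ((I₂.op y) ρ).trace = ρ.trace := by
    intro ρ
    have := I₂.tp ρ
    simpa [LinearMap.sum_apply, Matrix.trace_sum] using this
  have h2c : ((((2:ℝ))⁻¹ : ℝ) : ℂ) = (2:ℂ)⁻¹ := by push_cast; ring
  -- the noise instruments (full trash-and-prepare)
  have hTtp₁ : IsTP (∑ _x : ι₁, (trashPrep σ₁ : MatMap n m₁)) := by
    intro ρ
    have h : (∑ _x : ι₁, (trashPrep σ₁ : MatMap n m₁)) ρ = (Fintype.card ι₁ : ℂ) • (ρ.trace • σ₁) := by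
      simp [LinearMap.sum_apply, trashPrep_apply, Finset.sum_const, Finset.card_univ,
        ← Nat.cast_smul_eq_nsmul (R := ℂ)]
    rw [h, trace_smul, trace_smul, hσ₁tr, smul_eq_mul, smul_eq_mul]
    field_simp
  have hTtp₂ : IsTP (∑ _y : ι₂, (trashPrep σ₂ : MatMap n m₂)) := by
    intro ρ
    have h : (∑ _y : ι₂, (trashPrep σ₂ : MatMap n m₂)) ρ = (Fintype.card ι₂ : ℂ) • (ρ.trace • σ₂) := by
      simp [LinearMap.sum_apply, trashPrep_apply, Finset.sum_const, Finset.card_univ,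
        ← Nat.cast_smul_eq_nsmul (R := ℂ)]
    rw [h, trace_smul, trace_smul, hσ₂tr, smul_eq_mul, smul_eq_mul]
    field_simp
  let T₁ : Instrument ι₁ n m₁ :=
    { op := fun _ => trashPrep σ₁
      cp := fun _ => isCP_trashPrep hσ₁
      tp := hTtp₁ }
  let T₂ : Instrument ι₂ n m₂ :=
    { op := fun _ => trashPrep σ₂
      cp := fun _ => isCP_trashPrep hσ₂
      tp := hTtp₂ }
  -- the mixed instruments N₁, N₂
  let N₁ : Instrument ι₁ n m₁ :=
    { op := fun x => (2:ℂ)⁻¹ • (I₁.op x + trashPrep σ₁)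
      cp := fun x => by
        rw [← h2c]
        exact IsCP.smul_real (by norm_num) ((I₁.cp x).add' (isCP_trashPrep hσ₁))
      tp := by
        intro ρ
        simp only [LinearMap.sum_apply, LinearMap.smul_apply, LinearMap.add_apply,
          trashPrep_apply, Matrix.trace_sum, trace_smul, trace_add, smul_eq_mul, hσ₁tr,
          ← Finset.mul_sum, Finset.sum_add_distrib, Finset.sum_const, Finset.card_univ,
          nsmul_eq_mul, trsum₁]
        field_simp
        ring }
  let N₂ : Instrument ι₂ n m₂ :=
    { op := fun y => (2:ℂ)⁻¹ • (I₂.op y + trashPrep σ₂)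
      cp := fun y => by
        rw [← h2c]
        exact IsCP.smul_real (by norm_num) ((I₂.cp y).add' (isCP_trashPrep hσ₂))
      tp := by
        intro ρ
        simp only [LinearMap.sum_apply, LinearMap.smul_apply, LinearMap.add_apply,
          trashPrep_apply, Matrix.trace_sum, trace_smul, trace_add, smul_eq_mul, hσ₂tr,
          ← Finset.mul_sum, Finset.sum_add_distrib, Finset.sum_const, Finset.card_univ,
          nsmul_eq_mul, trsum₂]
        field_simp
        ring }
  -- the joint instrument
  set Jop : ι₁ × ι₂ → MatMap n (m₁ × m₂) :=
    fun p => (2:ℂ)⁻¹ • (kronRight σ₂ ∘ₗ I₁.op p.1 + kronLeft σ₁ ∘ₗ I₂.op p.2) with hJop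
  have hm₁ : ∀ x, ∑ y, ptrace₂ ∘ₗ Jop (x, y) = N₁.op x := by
    intro x
    apply LinearMap.ext; intro ρ
    simp only [hJop, LinearMap.sum_apply, LinearMap.comp_apply, LinearMap.smul_apply,
      LinearMap.add_apply, kronRight_apply, kronLeft_apply, _root_.map_smul, map_add,
      ptrace₂_kron, hσ₂tr]
    rw [← Finset.smul_sum, Finset.sum_add_distrib, Finset.sum_const, Finset.card_univ,
      ← Finset.sum_smul, trsum₂ ρ, ← Nat.cast_smul_eq_nsmul (R := ℂ), smul_smul,
      mul_inv_cancel₀ hk₂, one_smul]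
    show _ = (2:ℂ)⁻¹ • (I₁.op x ρ + trashPrep σ₁ ρ)
    rw [trashPrep_apply]
  have hm₂ : ∀ y, ∑ x, ptrace₁ ∘ₗ Jop (x, y) = N₂.op y := by
    intro y
    apply LinearMap.ext; intro ρ
    simp only [hJop, LinearMap.sum_apply, LinearMap.comp_apply, LinearMap.smul_apply,
      LinearMap.add_apply, kronRight_apply, kronLeft_apply, _root_.map_smul, map_add,
      ptrace₁_kron, hσ₁tr]
    rw [← Finset.smul_sum, Finset.sum_add_distrib, Finset.sum_const, Finset.card_univ,
      ← Finset.sum_smul, trsum₁ ρ, ← Nat.cast_smul_eq_nsmul (R := ℂ)]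
    rw [show (Fintype.card ι₁ : ℂ) • ((Fintype.card ι₁ : ℂ)⁻¹ • (I₂.op y) ρ)
        = (I₂.op y) ρ by rw [smul_smul, mul_inv_cancel₀ hk₁, one_smul]]
    show _ = (2:ℂ)⁻¹ • (I₂.op y ρ + trashPrep σ₂ ρ)
    rw [trashPrep_apply, add_comm]
  have hJtp : IsTP (∑ p, Jop p) := by
    intro ρ
    have hpt : ptrace₂ ((∑ p, Jop p) ρ) = (∑ x, N₁.op x) ρ := by
      simp only [LinearMap.sum_apply, map_sum]
      rw [Fintype.sum_prod_type]
      refine Finset.sum_congr rfl fun x _ => ?_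
      have := congrFun (congrArg (fun f => f.toFun) (hm₁ x)) ρ
      simpa [LinearMap.sum_apply, LinearMap.comp_apply] using this
    calc ((∑ p, Jop p) ρ).trace = (ptrace₂ ((∑ p, Jop p) ρ)).trace := (trace_ptrace₂ _).symm
      _ = ((∑ x, N₁.op x) ρ).trace := by rw [hpt]
      _ = ρ.trace := N₁.tp ρ
  let J : Instrument (ι₁ × ι₂) n (m₁ × m₂) :=
    { op := Jop
      cp := fun p => by
        rw [hJop]
        simp only
        rw [← h2c]
        exact IsCP.smul_real (by norm_num)
          ((isCP_kronRight hσ₂ (I₁.cp p.1)).add' (isCP_kronLeft hσ₁ (I₂.cp p.2)))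
      tp := hJtp }
  constructor
  · -- RI ≤ 1
    apply csInf_le ⟨0, fun r hr => hr.1⟩
    refine ⟨zero_le_one, T₁, T₂, J, fun x => ?_, fun y => ?_⟩
    · show ((1 + 1 : ℝ) : ℂ)⁻¹ • (I₁.op x + ((1:ℝ):ℂ) • trashPrep σ₁) = ∑ y, ptrace₂ ∘ₗ Jop (x, y)
      rw [hm₁ x]
      show _ = (2:ℂ)⁻¹ • (I₁.op x + trashPrep σ₁)
      norm_num
    · show ((1 + 1 : ℝ) : ℂ)⁻¹ • (I₂.op y + ((1:ℝ):ℂ) • trashPrep σ₂) = ∑ x, ptrace₁ ∘ₗ Jop (x, y)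
      rw [hm₂ y]
      show _ = (2:ℂ)⁻¹ • (I₂.op y + trashPrep σ₂)
      norm_num
  · exact ⟨N₁, N₂, fun x => rfl, fun y => rfl, J, hm₁, hm₂⟩
end

section
/- If I₁ ~ Ĩ₁ and I₂ ~ Ĩ₂ are post-processing equivalent pairs of instruments, then I₁ and I₂ are parallel compatible if and only if Ĩ₁ and Ĩ₂ are parallel compatible. -/
open Matrix
open scoped Kronecker BigOperators ComplexOrder

open QI Matrix
set_option linter.unusedSectionVars false

noncomputable section
namespace PPAux

variable {a b c d n m : Type*}

/-- Expand a linear map's action using the standard basis. -/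
lemma expand [Fintype n] [DecidableEq n] [Fintype m] (Φ : MatMap n m)
    (A : Matrix n n ℂ) (r s : m) :
    Φ A r s = ∑ i, ∑ j, A i j * Φ (Matrix.single i j 1) r s := by
  conv_lhs => rw [matrix_eq_sum_single A]
  simp only [map_sum, Matrix.sum_apply]
  refine Finset.sum_congr rfl fun i _ => Finset.sum_congr rfl fun j _ => ?_
  rw [show Matrix.single i j (A i j) = A i j • Matrix.single i j (1:ℂ) by
    rw [Matrix.smul_single, smul_eq_mul, mul_one]]
  rw [_root_.map_smul, Matrix.smul_apply, smul_eq_mul]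

lemma krausOp_std [Fintype n] [DecidableEq n] [Fintype m] (K : Matrix m n ℂ)
    (i j : n) (r s : m) :
    krausOp K (Matrix.single i j 1) r s = K r i * star (K s j) := by
  simp [krausOp, Matrix.mul_apply, Matrix.single, Matrix.conjTranspose_apply,
    Finset.sum_ite_eq, ite_and, Finset.mul_sum, Finset.sum_mul]


section Sums
variable {M' : Type*} [AddCommMonoid M'] {α β γ δ ε : Type*}
  [Fintype α] [Fintype β] [Fintype γ] [Fintype δ] [Fintype ε]

lemma sc12 (f : α → β → M') : ∑ i, ∑ j, f i j = ∑ j, ∑ i, f i j := Finset.sum_comm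

lemma sc23 (f : α → β → γ → M') :
    ∑ i, ∑ j, ∑ k, f i j k = ∑ i, ∑ k, ∑ j, f i j k :=
  Finset.sum_congr rfl fun _ _ => Finset.sum_comm

lemma sc34 (f : α → β → γ → δ → M') :
    ∑ i, ∑ j, ∑ k, ∑ l, f i j k l = ∑ i, ∑ j, ∑ l, ∑ k, f i j k l :=
  Finset.sum_congr rfl fun _ _ => Finset.sum_congr rfl fun _ _ => Finset.sum_comm

lemma sc45 (f : α → β → γ → δ → ε → M') :
    ∑ i, ∑ j, ∑ k, ∑ l, ∑ p, f i j k l p = ∑ i, ∑ j, ∑ k, ∑ p, ∑ l, f i j k l p :=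
  Finset.sum_congr rfl fun _ _ => Finset.sum_congr rfl fun _ _ =>
    Finset.sum_congr rfl fun _ _ => Finset.sum_comm

end Sums

section LMaps
variable {R M₁ M₂ M₃ : Type*} [CommSemiring R] [AddCommMonoid M₁] [AddCommMonoid M₂]
  [AddCommMonoid M₃] [Module R M₁] [Module R M₂] [Module R M₃]

lemma sumL_comp {ι : Type*} (t : Finset ι) (f : ι → M₂ →ₗ[R] M₃) (g : M₁ →ₗ[R] M₂) :
    (∑ i ∈ t, f i) ∘ₗ g = ∑ i ∈ t, f i ∘ₗ g := by
  apply LinearMap.ext; intro x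
  simp [LinearMap.sum_apply]

lemma compL_sum {ι : Type*} (t : Finset ι) (g : M₂ →ₗ[R] M₃) (f : ι → M₁ →ₗ[R] M₂) :
    g ∘ₗ (∑ i ∈ t, f i) = ∑ i ∈ t, g ∘ₗ f i := by
  apply LinearMap.ext; intro x
  simp [LinearMap.sum_apply]

end LMaps

section TMap
variable [Fintype a] [DecidableEq a] [Fintype b] [DecidableEq b] [Fintype c] [Fintype d]

/-- Tensor product of superoperators. -/
def tmap (Φ : MatMap a c) (Ψ : MatMap b d) : MatMap (a × b) (c × d) where
  toFun M := Matrix.of fun r s => ∑ i, ∑ j, ∑ i', ∑ j',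
    M (i, i') (j, j') *
      (Φ (Matrix.single i j 1) r.1 s.1 * Ψ (Matrix.single i' j' 1) r.2 s.2)
  map_add' M N := by
    ext r s
    simp [Matrix.add_apply, add_mul, Finset.sum_add_distrib]
  map_smul' t M := by
    ext r s
    simp [Finset.mul_sum, mul_assoc]

lemma tmap_apply (Φ : MatMap a c) (Ψ : MatMap b d) (M : Matrix (a × b) (a × b) ℂ)
    (r s : c × d) :
    tmap Φ Ψ M r s = ∑ i, ∑ j, ∑ i', ∑ j',
      M (i, i') (j, j') *
        (Φ (Matrix.single i j 1) r.1 s.1 *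
          Ψ (Matrix.single i' j' 1) r.2 s.2) := rfl

lemma tmap_add_left (Φ Φ' : MatMap a c) (Ψ : MatMap b d) :
    tmap (Φ + Φ') Ψ = tmap Φ Ψ + tmap Φ' Ψ := by
  apply LinearMap.ext; intro M
  ext r s
  simp [tmap_apply, LinearMap.add_apply, Matrix.add_apply, add_mul, mul_add,
    Finset.sum_add_distrib]

lemma tmap_zero_left (Ψ : MatMap b d) : tmap (0 : MatMap a c) Ψ = 0 := by
  apply LinearMap.ext; intro M
  ext r s
  simp [tmap_apply]

lemma tmap_add_right (Φ : MatMap a c) (Ψ Ψ' : MatMap b d) :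
    tmap Φ (Ψ + Ψ') = tmap Φ Ψ + tmap Φ Ψ' := by
  apply LinearMap.ext; intro M
  ext r s
  simp [tmap_apply, LinearMap.add_apply, Matrix.add_apply, add_mul, mul_add,
    Finset.sum_add_distrib]

lemma tmap_zero_right (Φ : MatMap a c) : tmap Φ (0 : MatMap b d) = 0 := by
  apply LinearMap.ext; intro M
  ext r s
  simp [tmap_apply]

lemma tmap_sum_left {ι : Type*} (t : Finset ι) (f : ι → MatMap a c) (Ψ : MatMap b d) :
    tmap (∑ x ∈ t, f x) Ψ = ∑ x ∈ t, tmap (f x) Ψ := by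
  classical
  induction t using Finset.cons_induction with
  | empty => simp [tmap_zero_left]
  | cons x t hx ih => rw [Finset.sum_cons, Finset.sum_cons, tmap_add_left, ih]

lemma tmap_sum_right {ι : Type*} (t : Finset ι) (Φ : MatMap a c) (f : ι → MatMap b d) :
    tmap Φ (∑ x ∈ t, f x) = ∑ x ∈ t, tmap Φ (f x) := by
  classical
  induction t using Finset.cons_induction with
  | empty => simp [tmap_zero_right]
  | cons x t hx ih => rw [Finset.sum_cons, Finset.sum_cons, tmap_add_right, ih]

lemma tmap_kraus (K : Matrix c a ℂ) (L : Matrix d b ℂ) :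
    tmap (krausOp K) (krausOp L) = krausOp (K ⊗ₖ L) := by
  apply LinearMap.ext; intro M
  ext ⟨r1, r2⟩ ⟨s1, s2⟩
  rw [tmap_apply]
  simp only [PPAux.krausOp_std]
  show _ = (K ⊗ₖ L * M * (K ⊗ₖ L)ᴴ) (r1, r2) (s1, s2)
  simp only [Matrix.mul_apply, Matrix.conjTranspose_apply, Matrix.kroneckerMap_apply,
    Fintype.sum_prod_type, Finset.sum_mul, Finset.mul_sum]
  rw [sc12, sc23, sc34, sc23, sc34]
  refine Finset.sum_congr rfl fun j _ => Finset.sum_congr rfl fun j' _ =>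
    Finset.sum_congr rfl fun i _ => Finset.sum_congr rfl fun i' _ => ?_
  simp only [star_mul']
  ring

end TMap

section CP
variable [Fintype n] [DecidableEq n] [Fintype m]

lemma choi_apply (Φ : MatMap n m) (p q : n × m) :
    choi Φ p q = Φ (Matrix.single p.1 q.1 1) p.2 q.2 := rfl

lemma choi_sum {ι : Type*} (t : Finset ι) (f : ι → MatMap n m) :
    choi (∑ x ∈ t, f x) = ∑ x ∈ t, choi (f x) := by
  ext p q
  simp [choi_apply, LinearMap.sum_apply, Matrix.sum_apply]

lemma isCP_sum {ι : Type*} (t : Finset ι) (f : ι → MatMap n m)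
    (h : ∀ x ∈ t, IsCP (f x)) : IsCP (∑ x ∈ t, f x) := by
  rw [IsCP, choi_sum]
  classical
  induction t using Finset.cons_induction with
  | empty => simpa using Matrix.PosSemidef.zero
  | cons x t hx ih =>
      rw [Finset.sum_cons]
      exact ((h x (Finset.mem_cons_self x t)).add
        (ih fun y hy => h y (Finset.mem_cons_of_mem hy)))

lemma krausOp_cp (K : Matrix m n ℂ) : IsCP (krausOp K) := by
  have : choi (krausOp K)
      = (Matrix.of fun (_ : Unit) (v : n × m) => star (K v.2 v.1))ᴴ *
        (Matrix.of fun (_ : Unit) (v : n × m) => star (K v.2 v.1)) := by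
    ext ⟨p, s⟩ ⟨q, t⟩
    simp [choi_apply, PPAux.krausOp_std, Matrix.mul_apply, Matrix.conjTranspose_apply]
  rw [IsCP, this]
  exact Matrix.posSemidef_conjTranspose_mul_self _

lemma cp_of_kraus {ι : Type*} [Fintype ι] (K : ι → Matrix m n ℂ) :
    IsCP (∑ r, krausOp (K r)) :=
  isCP_sum _ _ fun r _ => krausOp_cp (K r)

lemma isCP_iff_kraus (Φ : MatMap n m) :
    IsCP Φ ↔ ∃ K : (n × m) → Matrix m n ℂ, Φ = ∑ r, krausOp (K r) := by
  constructor
  · intro h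
    obtain ⟨B, hB⟩ := (show ∃ B : Matrix (n × m) (n × m) ℂ, choi Φ = Bᴴ * B by
      classical
      open scoped MatrixOrder in
      exact ⟨CFC.sqrt (choi Φ), by
        rw [(CFC.sqrt_nonneg (choi Φ)).posSemidef.isHermitian.eq,
          CFC.sqrt_mul_sqrt_self (choi Φ) (show (choi Φ).PosSemidef from h).nonneg]⟩)
    refine ⟨fun r => Matrix.of fun i p => star (B r (p, i)), ?_⟩
    apply LinearMap.ext; intro ρ
    ext s t
    rw [PPAux.expand Φ ρ s t]
    have key : ∀ p q : n, Φ (Matrix.single p q 1) s t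
        = ∑ r, star (B r (p, s)) * B r (q, t) := by
      intro p q
      have := congrFun (congrFun hB (p, s)) (q, t)
      simpa [choi_apply, Matrix.mul_apply, Matrix.conjTranspose_apply] using this
    simp only [key, LinearMap.sum_apply, Matrix.sum_apply, krausOp, LinearMap.coe_mk,
      AddHom.coe_mk, Matrix.mul_apply, Matrix.conjTranspose_apply, Matrix.of_apply,
      Finset.mul_sum, Finset.sum_mul]
    rw [sc23, sc12]
    refine Finset.sum_congr rfl fun r _ => ?_
    rw [sc12]
    refine Finset.sum_congr rfl fun q _ => Finset.sum_congr rfl fun p _ => ?_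
    simp only [star_star]
    ring
  · rintro ⟨K, rfl⟩
    exact cp_of_kraus K

lemma krausOp_comp {k : Type*} [Fintype k] (L : Matrix k m ℂ) (K : Matrix m n ℂ) :
    krausOp L ∘ₗ krausOp K = krausOp (L * K) := by
  apply LinearMap.ext; intro ρ
  simp [krausOp, Matrix.conjTranspose_mul, Matrix.mul_assoc]

lemma isCP_comp {k : Type*} [Fintype k] [DecidableEq m] {Φ : MatMap n m} {Ψ : MatMap m k}
    (hΦ : IsCP Φ) (hΨ : IsCP Ψ) : IsCP (Ψ ∘ₗ Φ) := by
  obtain ⟨K, rfl⟩ := (isCP_iff_kraus Φ).mp hΦ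
  obtain ⟨L, rfl⟩ := (isCP_iff_kraus Ψ).mp hΨ
  rw [sumL_comp]
  refine isCP_sum _ _ fun s _ => ?_
  rw [compL_sum]
  refine isCP_sum _ _ fun r _ => ?_
  rw [krausOp_comp]
  exact krausOp_cp _

end CP

section TMapCP
variable [Fintype a] [DecidableEq a] [Fintype b] [DecidableEq b] [Fintype c] [Fintype d]

lemma isCP_tmap {Φ : MatMap a c} {Ψ : MatMap b d} (hΦ : IsCP Φ) (hΨ : IsCP Ψ) :
    IsCP (tmap Φ Ψ) := by
  obtain ⟨K, rfl⟩ := (isCP_iff_kraus Φ).mp hΦ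
  obtain ⟨L, rfl⟩ := (isCP_iff_kraus Ψ).mp hΨ
  rw [tmap_sum_left]
  refine isCP_sum _ _ fun r _ => ?_
  rw [tmap_sum_right]
  refine isCP_sum _ _ fun s _ => ?_
  rw [tmap_kraus]
  exact krausOp_cp _

end TMapCP

section PTrace
variable [Fintype a] [Fintype b] [Fintype c] [Fintype d]

lemma trace_std {e : Type*} [Fintype e] [DecidableEq e] (i j : e) :
    (Matrix.single i j (1 : ℂ)).trace = if i = j then 1 else 0 := by
  simp [Matrix.trace, Matrix.single, Matrix.diag, ite_and, Finset.sum_ite_eq, eq_comm]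

lemma ptrace₂_apply (M : Matrix (a × b) (a × b) ℂ) (i j : a) :
    ptrace₂ M i j = ∑ k, M (i, k) (j, k) := rfl

lemma ptrace₁_apply (M : Matrix (a × b) (a × b) ℂ) (i j : b) :
    ptrace₁ M i j = ∑ k, M (k, i) (k, j) := rfl

lemma trace_ptrace₂ (M : Matrix (a × b) (a × b) ℂ) : (ptrace₂ M).trace = M.trace := by
  simp only [Matrix.trace, Matrix.diag, ptrace₂_apply, Fintype.sum_prod_type]

lemma ptrace₂_tmap [DecidableEq a] [DecidableEq b] (Φ : MatMap a c) {Ψ : MatMap b d} (hΨ : IsTP Ψ) :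
    ptrace₂ ∘ₗ tmap Φ Ψ = Φ ∘ₗ ptrace₂ := by
  have htr : ∀ i' j' : b, (∑ k : d, Ψ (Matrix.single i' j' 1) k k)
      = if i' = j' then 1 else 0 := by
    intro i' j'
    have h := hΨ (Matrix.single i' j' 1)
    rw [show (∑ k : d, Ψ (Matrix.single i' j' 1) k k)
        = (Ψ (Matrix.single i' j' 1)).trace from rfl, h, trace_std]
  apply LinearMap.ext; intro M
  ext p q
  show ptrace₂ (tmap Φ Ψ M) p q = Φ (ptrace₂ M) p q
  rw [PPAux.expand Φ (ptrace₂ M) p q, ptrace₂_apply]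
  simp only [tmap_apply]
  rw [sc12, sc23, sc34, sc45]
  refine Finset.sum_congr rfl fun i _ => Finset.sum_congr rfl fun j _ => ?_
  rw [ptrace₂_apply, Finset.sum_mul]
  rw [show (∑ i' : b, ∑ j' : b, ∑ k : d, M (i, i') (j, j') *
      (Φ (Matrix.single i j 1) p q * Ψ (Matrix.single i' j' 1) k k))
    = ∑ i' : b, ∑ j' : b, M (i, i') (j, j') * Φ (Matrix.single i j 1) p q *
      (if i' = j' then 1 else 0) from
    Finset.sum_congr rfl fun i' _ => Finset.sum_congr rfl fun j' _ => by
      rw [← Finset.mul_sum, ← Finset.mul_sum, htr]; ring]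
  refine Finset.sum_congr rfl fun i' _ => ?_
  simp [Finset.sum_ite_eq, mul_ite]

lemma ptrace₁_tmap [DecidableEq a] [DecidableEq b] {Φ : MatMap a c} (Ψ : MatMap b d) (hΦ : IsTP Φ) :
    ptrace₁ ∘ₗ tmap Φ Ψ = Ψ ∘ₗ ptrace₁ := by
  have htr : ∀ i j : a, (∑ k : c, Φ (Matrix.single i j 1) k k)
      = if i = j then 1 else 0 := by
    intro i j
    have h := hΦ (Matrix.single i j 1)
    rw [show (∑ k : c, Φ (Matrix.single i j 1) k k)
        = (Φ (Matrix.single i j 1)).trace from rfl, h, trace_std]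
  apply LinearMap.ext; intro M
  ext p q
  show ptrace₁ (tmap Φ Ψ M) p q = Ψ (ptrace₁ M) p q
  rw [PPAux.expand Ψ (ptrace₁ M) p q]
  show (∑ k : c, tmap Φ Ψ M (k, p) (k, q)) = _
  simp only [tmap_apply]
  rw [sc12, sc23, sc34, sc45, sc23, sc12, sc34, sc23]
  refine Finset.sum_congr rfl fun i' _ => Finset.sum_congr rfl fun j' _ => ?_
  rw [ptrace₁_apply, Finset.sum_mul]
  rw [show (∑ i : a, ∑ j : a, ∑ k : c, M (i, i') (j, j') *
      (Φ (Matrix.single i j 1) k k * Ψ (Matrix.single i' j' 1) p q))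
    = ∑ i : a, ∑ j : a, M (i, i') (j, j') * Ψ (Matrix.single i' j' 1) p q *
      (if i = j then 1 else 0) from
    Finset.sum_congr rfl fun i _ => Finset.sum_congr rfl fun j _ => by
      rw [← Finset.mul_sum]
      rw [show (∑ k : c, Φ (Matrix.single i j 1) k k *
          Ψ (Matrix.single i' j' 1) p q)
        = (∑ k : c, Φ (Matrix.single i j 1) k k) *
          Ψ (Matrix.single i' j' 1) p q from (Finset.sum_mul _ _ _).symm, htr]
      ring]
  refine Finset.sum_congr rfl fun i _ => ?_
  simp [Finset.sum_ite_eq, mul_ite]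

lemma tmap_tp [DecidableEq a] [DecidableEq b] {Φ : MatMap a c} {Ψ : MatMap b d} (hΦ : IsTP Φ) (hΨ : IsTP Ψ) :
    IsTP (tmap Φ Ψ) := by
  intro M
  rw [← trace_ptrace₂ (tmap Φ Ψ M),
    show ptrace₂ (tmap Φ Ψ M) = (ptrace₂ ∘ₗ tmap Φ Ψ) M from rfl,
    ptrace₂_tmap Φ hΨ]
  rw [LinearMap.comp_apply, hΦ, trace_ptrace₂]

end PTrace

section Main
variable {ι₁ ι₂ κ₁ κ₂ N M₁ M₂ K₁ K₂ : Type*}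
  [Fintype ι₁] [Fintype ι₂] [Fintype κ₁] [Fintype κ₂]
  [Fintype N] [DecidableEq N]
  [Fintype M₁] [DecidableEq M₁] [Fintype M₂] [DecidableEq M₂]
  [Fintype K₁] [Fintype K₂]

lemma compat_mono
    {I₁ : Instrument ι₁ N M₁} {I₂ : Instrument ι₂ N M₂}
    {J₁ : Instrument κ₁ N K₁} {J₂ : Instrument κ₂ N K₂}
    (h1 : PostProcessingOf J₁ I₁) (h2 : PostProcessingOf J₂ I₂)
    (hC : ParallelCompatible I₁ I₂) : ParallelCompatible J₁ J₂ := by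
  obtain ⟨R, hR⟩ := h1
  obtain ⟨S, hS⟩ := h2
  obtain ⟨K, hK1, hK2⟩ := hC
  refine ⟨{ op := fun ab => ∑ x, ∑ y, tmap ((R x).op ab.1) ((S y).op ab.2) ∘ₗ K.op (x, y)
            cp := ?_
            tp := ?_ }, ?_, ?_⟩
  · intro ab
    exact isCP_sum _ _ fun x _ => isCP_sum _ _ fun y _ =>
      isCP_comp (K.cp (x, y)) (isCP_tmap ((R x).cp ab.1) ((S y).cp ab.2))
  · -- trace preservation
    have hform : (∑ ab : κ₁ × κ₂, ∑ x, ∑ y,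
        tmap ((R x).op ab.1) ((S y).op ab.2) ∘ₗ K.op (x, y))
        = ∑ x, ∑ y, tmap (∑ a, (R x).op a) (∑ b, (S y).op b) ∘ₗ K.op (x, y) := by
      rw [Fintype.sum_prod_type]
      rw [sc23, sc12, sc34, sc23]
      refine Finset.sum_congr rfl fun x _ => Finset.sum_congr rfl fun y _ => ?_
      rw [tmap_sum_left, sumL_comp]
      refine Finset.sum_congr rfl fun a _ => ?_
      rw [tmap_sum_right, sumL_comp]
    intro ρ
    rw [hform]
    simp only [LinearMap.sum_apply, LinearMap.comp_apply, Matrix.trace_sum]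
    have hterm : ∀ x y, (tmap (∑ a, (R x).op a) (∑ b, (S y).op b) (K.op (x, y) ρ)).trace
        = (K.op (x, y) ρ).trace := fun x y => tmap_tp (R x).tp (S y).tp _
    simp only [hterm]
    have := K.tp ρ
    rw [LinearMap.sum_apply, Matrix.trace_sum, Fintype.sum_prod_type] at this
    exact this
  · -- first marginal
    intro aκ
    have step : ∀ bκ, ptrace₂ ∘ₗ (∑ x, ∑ y, tmap ((R x).op aκ) ((S y).op bκ) ∘ₗ K.op (x, y))
        = ∑ x, ∑ y, ptrace₂ ∘ₗ (tmap ((R x).op aκ) ((S y).op bκ) ∘ₗ K.op (x, y)) := by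
      intro bκ
      rw [compL_sum]
      exact Finset.sum_congr rfl fun x _ => by rw [compL_sum]
    simp only [step]
    rw [sc12, sc23, hR aκ]
    refine Finset.sum_congr rfl fun x _ => ?_
    rw [← hK1 x, compL_sum]
    refine Finset.sum_congr rfl fun y _ => ?_
    calc ∑ b, ptrace₂ ∘ₗ (tmap ((R x).op aκ) ((S y).op b) ∘ₗ K.op (x, y))
        = ∑ b, (ptrace₂ ∘ₗ tmap ((R x).op aκ) ((S y).op b)) ∘ₗ K.op (x, y) :=
          Finset.sum_congr rfl fun b _ => by rw [LinearMap.comp_assoc]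
      _ = (∑ b, ptrace₂ ∘ₗ tmap ((R x).op aκ) ((S y).op b)) ∘ₗ K.op (x, y) :=
          (sumL_comp _ _ _).symm
      _ = (ptrace₂ ∘ₗ tmap ((R x).op aκ) (∑ b, (S y).op b)) ∘ₗ K.op (x, y) := by
          rw [tmap_sum_right, compL_sum]
      _ = (((R x).op aκ) ∘ₗ ptrace₂) ∘ₗ K.op (x, y) := by
          rw [ptrace₂_tmap _ (S y).tp]
      _ = ((R x).op aκ) ∘ₗ (ptrace₂ ∘ₗ K.op (x, y)) := by rw [LinearMap.comp_assoc]
  · -- second marginal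
    intro bκ
    have step : ∀ aκ, ptrace₁ ∘ₗ (∑ x, ∑ y, tmap ((R x).op aκ) ((S y).op bκ) ∘ₗ K.op (x, y))
        = ∑ x, ∑ y, ptrace₁ ∘ₗ (tmap ((R x).op aκ) ((S y).op bκ) ∘ₗ K.op (x, y)) := by
      intro aκ
      rw [compL_sum]
      exact Finset.sum_congr rfl fun x _ => by rw [compL_sum]
    simp only [step]
    rw [sc23, sc12, sc23, hS bκ]
    refine Finset.sum_congr rfl fun y _ => ?_
    rw [← hK2 y, compL_sum]
    refine Finset.sum_congr rfl fun x _ => ?_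
    calc ∑ a, ptrace₁ ∘ₗ (tmap ((R x).op a) ((S y).op bκ) ∘ₗ K.op (x, y))
        = ∑ a, (ptrace₁ ∘ₗ tmap ((R x).op a) ((S y).op bκ)) ∘ₗ K.op (x, y) :=
          Finset.sum_congr rfl fun a _ => by rw [LinearMap.comp_assoc]
      _ = (∑ a, ptrace₁ ∘ₗ tmap ((R x).op a) ((S y).op bκ)) ∘ₗ K.op (x, y) :=
          (sumL_comp _ _ _).symm
      _ = (ptrace₁ ∘ₗ tmap (∑ a, (R x).op a) ((S y).op bκ)) ∘ₗ K.op (x, y) := by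
          rw [tmap_sum_left, compL_sum]
      _ = (((S y).op bκ) ∘ₗ ptrace₁) ∘ₗ K.op (x, y) := by
          rw [ptrace₁_tmap _ (R x).tp]
      _ = ((S y).op bκ) ∘ₗ (ptrace₁ ∘ₗ K.op (x, y)) := by rw [LinearMap.comp_assoc]

end Main

end PPAux
end

open QI in
/-- post-processing equivalent pairs are compatible iff each other is. -/
theorem postprocessing_equiv_compatibility_iff
    {ι₁ ι₂ κ₁ κ₂ n m₁ m₂ k₁ k₂ : Type*}
    [Fintype ι₁] [Fintype ι₂] [Fintype κ₁] [Fintype κ₂]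
    [Fintype n] [DecidableEq n]
    [Fintype m₁] [DecidableEq m₁] [Fintype m₂] [DecidableEq m₂]
    [Fintype k₁] [DecidableEq k₁] [Fintype k₂] [DecidableEq k₂]
    (I₁ : Instrument ι₁ n m₁) (I₂ : Instrument ι₂ n m₂)
    (J₁ : Instrument κ₁ n k₁) (J₂ : Instrument κ₂ n k₂)
    (h₁ : PostProcessingOf J₁ I₁ ∧ PostProcessingOf I₁ J₁)
    (h₂ : PostProcessingOf J₂ I₂ ∧ PostProcessingOf I₂ J₂) :
    (ParallelCompatible I₁ I₂ ↔ ParallelCompatible J₁ J₂) := by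
  exact ⟨fun hC => PPAux.compat_mono h₁.1 h₂.1 hC,
    fun hC => PPAux.compat_mono h₁.2 h₂.2 hC⟩
end
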